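/- For every f ∈ C_s there is a unique f̂ ∈ Ĉ such that f̂(s(x)) = f(x) for every x ∈ [0,r), f̂(s(x−)) = f(x−) for every x ∈ (0,r), and f̂(s(x+)) = f(x+) for every x ∈ (0,r) with s(x+) < r̂. The map T : C_s → Ĉ, Tf := f̂, is a linear bijection. Moreover, T maps C_s^* := {f ∈ C_s : lim_{x↑r} f(x) exists in ℝ} bijectively onto Ĉ^* := {f̂ ∈ Ĉ : lim_{x̂↑r̂} f̂(x̂) exists in ℝ}. -/

import Mathlib

open MeasureTheory Set Filter Topology
open scoped Classical

/-- The interval `[0, r)` inside `ℝ`, for `r ∈ (0, ∞]`. -/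
def Ilt (r : EReal) : Set ℝ := {x : ℝ | 0 ≤ x ∧ (x : EReal) < r}

/-- `r̂ = s(r−)`, the supremum of `s` over `[0, r)`, as an extended real. -/
noncomputable def rhat (s : ℝ → ℝ) (r : EReal) : EReal :=
  sSup ((fun x : ℝ => (s x : EReal)) '' Ilt r)

/-- `s(x−)`, the left limit of the nondecreasing function `s` at `x` (with the
convention `s(0−) = s(0)`, and more generally `s(x−) = s(x)` when there is no
point of `I` below `x`). -/
noncomputable def sminus (s : ℝ → ℝ) (I : Set ℝ) (x : ℝ) : ℝ :=
  if (I ∩ Set.Iio x).Nonempty then sSup (s '' (I ∩ Set.Iio x)) else s x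

/-- `s(x+)`, the right limit of the nondecreasing function `s` at `x` (with the
convention `s(r+) = s(r)` when `r ∈ I`, and more generally `s(x+) = s(x)` when
there is no point of `I` above `x`). -/
noncomputable def splus (s : ℝ → ℝ) (I : Set ℝ) (x : ℝ) : ℝ :=
  if (I ∩ Set.Ioi x).Nonempty then sInf (s '' (I ∩ Set.Ioi x)) else s x

/-- `s(I)`, viewed inside `[−∞, ∞]`. -/
def sImage (s : ℝ → ℝ) (I : Set ℝ) : Set EReal := (fun x : ℝ => (s x : EReal)) '' I

/-- `Î`: the closure of `s(I)` in `[−∞,∞]` if `r ∈ I`, and this closure with the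
point `r̂` removed if `r ∉ I`. -/
noncomputable def Ihat (s : ℝ → ℝ) (I : Set ℝ) (r : EReal) : Set EReal :=
  if ∃ rr : ℝ, (rr : EReal) = r ∧ rr ∈ I then closure (sImage s I)
  else closure (sImage s I) \ {rhat s r}

/-- The interval `[0, r̂)` inside `ℝ`. -/
def Shat (s : ℝ → ℝ) (r : EReal) : Set ℝ := {x : ℝ | 0 ≤ x ∧ (x : EReal) < rhat s r}

/-- The class `C_s` of `s`-continuous functions on `[0, r)`. -/
def Cs (s : ℝ → ℝ) (r : EReal) : Set (ℝ → ℝ) :=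
  {f : ℝ → ℝ |
    Filter.Tendsto f (nhdsWithin 0 (Set.Ioi 0)) (nhds (f 0)) ∧
    (∀ x : ℝ, 0 < x → (x : EReal) < r →
      (∃ L : ℝ, Filter.Tendsto f (nhdsWithin x (Set.Iio x)) (nhds L)) ∧
      (∃ L : ℝ, Filter.Tendsto f (nhdsWithin x (Set.Ioi x)) (nhds L))) ∧
    (∀ x : ℝ, 0 < x → (x : EReal) < r →
      (Filter.Tendsto s (nhdsWithin x (Set.Ioi x)) (nhds (s x)) →
        Filter.Tendsto f (nhdsWithin x (Set.Ioi x)) (nhds (f x))) ∧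
      (Filter.Tendsto s (nhdsWithin x (Set.Iio x)) (nhds (s x)) →
        Filter.Tendsto f (nhdsWithin x (Set.Iio x)) (nhds (f x)))) ∧
    (∀ x y : ℝ, 0 ≤ x → x ≤ y → (y : EReal) < r → s x = s y → f x = f y)}

/-- The class `Ĉ` of continuous functions on `[0, r̂)` that are affine on the
connected components of `[0, r̂) ∖ Î`. -/
def Chat (s : ℝ → ℝ) (I : Set ℝ) (r : EReal) : Set (ℝ → ℝ) :=
  {fh : ℝ → ℝ |
    ContinuousOn fh (Shat s r) ∧
    ∀ a b : ℝ, Set.Ioo a b ⊆ Shat s r \ {xh : ℝ | (xh : EReal) ∈ Ihat s I r} →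
      ∀ x ∈ Set.Ioo a b, ∀ y ∈ Set.Ioo a b, ∀ t ∈ Set.Icc (0 : ℝ) 1,
        fh (t * x + (1 - t) * y) = t * fh x + (1 - t) * fh y}

/-- `fh` is the function on `[0, r̂)` corresponding to `f` under `T`:
`fh(s(x)) = f(x)`, `fh(s(x−)) = f(x−)` and, when `s(x+) < r̂`, `fh(s(x+)) = f(x+)`. -/
def MatchRel (s : ℝ → ℝ) (I : Set ℝ) (r : EReal) (f fh : ℝ → ℝ) : Prop :=
  (∀ x ∈ Ilt r, fh (s x) = f x) ∧
  (∀ x : ℝ, 0 < x → (x : EReal) < r → ∀ L : ℝ,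
    Filter.Tendsto f (nhdsWithin x (Set.Iio x)) (nhds L) → fh (sminus s I x) = L) ∧
  (∀ x : ℝ, 0 < x → (x : EReal) < r → ((splus s I x : ℝ) : EReal) < rhat s r →
    ∀ L : ℝ, Filter.Tendsto f (nhdsWithin x (Set.Ioi x)) (nhds L) →
      fh (splus s I x) = L)


namespace S9

/-- Bundle of standing hypotheses. -/
structure Good (r : EReal) (I : Set ℝ) (s : ℝ → ℝ) : Prop where
  hr : 0 < r
  hI : I = Ilt r ∨ ∃ rr : ℝ, r = (rr : EReal) ∧ I = Set.Icc 0 rr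
  mono : MonotoneOn s I
  hs0 : s 0 = 0
  hs0' : Filter.Tendsto s (nhdsWithin 0 (Set.Ioi 0)) (nhds 0)
  hslt : ∀ x ∈ Ilt r, ((s x : ℝ) : EReal) < rhat s r
  hsr : ∀ rr : ℝ, r = (rr : EReal) → rr ∈ I → ((s rr : ℝ) : EReal) = rhat s r

variable {r : EReal} {I : Set ℝ} {s : ℝ → ℝ} {f : ℝ → ℝ}

lemma zero_mem_Ilt (H : Good r I s) : (0:ℝ) ∈ Ilt r :=
  ⟨le_refl 0, by exact_mod_cast H.hr⟩

lemma Ilt_subset (H : Good r I s) : Ilt r ⊆ I := by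
  rcases H.hI with h | ⟨rr, hrr, h⟩
  · rw [h]
  · rw [h]; rintro x ⟨hx0, hxr⟩
    rw [hrr] at hxr
    exact ⟨hx0, le_of_lt (EReal.coe_lt_coe_iff.1 hxr)⟩

lemma zero_mem_I (H : Good r I s) : (0:ℝ) ∈ I := Ilt_subset H (zero_mem_Ilt H)

lemma mem_I_nonneg (H : Good r I s) {x : ℝ} (hx : x ∈ I) : 0 ≤ x := by
  rcases H.hI with h | ⟨rr, _, h⟩
  · rw [h] at hx; exact hx.1
  · rw [h] at hx; exact hx.1

lemma mem_I_le_r (H : Good r I s) {x : ℝ} (hx : x ∈ I) : (x : EReal) ≤ r := by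
  rcases H.hI with h | ⟨rr, hrr, h⟩
  · rw [h] at hx; exact le_of_lt hx.2
  · rw [h] at hx; rw [hrr]; exact_mod_cast hx.2

lemma mem_Ilt_of_le {x z : ℝ} (hx : x ∈ Ilt r) (hz0 : 0 ≤ z) (hzx : z ≤ x) : z ∈ Ilt r :=
  ⟨hz0, lt_of_le_of_lt (EReal.coe_le_coe_iff.2 hzx) hx.2⟩

lemma Ioo_subset_Ilt {p x : ℝ} (hp : 0 ≤ p) (hx : x ∈ Ilt r) : Set.Ioo p x ⊆ Ilt r :=
  fun z hz => mem_Ilt_of_le hx (le_trans hp (le_of_lt hz.1)) (le_of_lt hz.2)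

lemma mem_I_cases (H : Good r I s) {z : ℝ} (hz : z ∈ I) :
    z ∈ Ilt r ∨ ((s z : ℝ) : EReal) = rhat s r := by
  rcases H.hI with h | ⟨rr, hrr, h⟩
  · rw [h] at hz; exact Or.inl hz
  · rw [h] at hz
    rcases lt_or_eq_of_le hz.2 with h' | h'
    · exact Or.inl ⟨hz.1, by rw [hrr]; exact_mod_cast h'⟩
    · right
      have : rr ∈ I := by rw [h]; exact ⟨le_trans hz.1 hz.2, le_refl rr⟩
      rw [h'] ; exact H.hsr rr hrr this

lemma exists_gt_Ilt (H : Good r I s) {x : ℝ} (hx : x ∈ Ilt r) :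
    ∃ w, w ∈ Ilt r ∧ x < w := by
  obtain ⟨w, hw1, hw2⟩ := EReal.exists_between_coe_real hx.2
  have hxw : x < w := EReal.coe_lt_coe_iff.1 hw1
  exact ⟨w, ⟨le_trans hx.1 (le_of_lt hxw), hw2⟩, hxw⟩

lemma s_nonneg (H : Good r I s) {x : ℝ} (hx : x ∈ I) : 0 ≤ s x := by
  have := H.mono (zero_mem_I H) hx (mem_I_nonneg H hx)
  rwa [H.hs0] at this

lemma s_mem_Shat (H : Good r I s) {x : ℝ} (hx : x ∈ Ilt r) : s x ∈ Shat s r :=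
  ⟨s_nonneg H (Ilt_subset H hx), H.hslt x hx⟩

/-! ### τ -/

def Aset (r : EReal) (s : ℝ → ℝ) (y : ℝ) : Set ℝ := {z : ℝ | z ∈ Ilt r ∧ y < s z}

noncomputable def tau (r : EReal) (s : ℝ → ℝ) (y : ℝ) : ℝ := sInf (Aset r s y)

lemma Aset_bddBelow : BddBelow (Aset r s y) := ⟨0, fun z hz => hz.1.1⟩

lemma Aset_nonempty (H : Good r I s) {y : ℝ} (hy : (y : EReal) < rhat s r) :
    (Aset r s y).Nonempty := by
  obtain ⟨b, ⟨x, hx, rfl⟩, hb⟩ := lt_sSup_iff.1 hy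
  exact ⟨x, hx, EReal.coe_lt_coe_iff.1 hb⟩

lemma tau_le {y z : ℝ} (hz : z ∈ Aset r s y) : tau r s y ≤ z := csInf_le Aset_bddBelow hz

lemma tau_nonneg (H : Good r I s) {y : ℝ} (hne : (Aset r s y).Nonempty) : 0 ≤ tau r s y :=
  le_csInf hne fun z hz => hz.1.1

lemma tau_mem (H : Good r I s) {y : ℝ} (hne : (Aset r s y).Nonempty) : tau r s y ∈ Ilt r := by
  obtain ⟨z, hz⟩ := id hne
  exact ⟨le_csInf hne fun w hw => hw.1.1,
    lt_of_le_of_lt (EReal.coe_le_coe_iff.2 (tau_le hz)) hz.1.2⟩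

lemma le_tau (H : Good r I s) {y w : ℝ} (hne : (Aset r s y).Nonempty)
    (hw : w ∈ I) (hsw : s w < y) : w ≤ tau r s y := by
  refine le_csInf hne fun z hz => ?_
  by_contra h
  push_neg at h
  exact absurd hz.2 (not_lt.2 (le_of_lt (lt_of_le_of_lt
    (H.mono (Ilt_subset H hz.1) hw h.le) hsw)))

lemma s_le_of_lt_tau (H : Good r I s) {y z : ℝ} (hz : z ∈ Ilt r) (h : z < tau r s y) :
    s z ≤ y := by
  by_contra hc
  push_neg at hc
  exact absurd (tau_le ⟨hz, hc⟩) (not_le.2 h)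

lemma lt_s_of_tau_lt (H : Good r I s) {y z : ℝ} (hne : (Aset r s y).Nonempty)
    (hz : z ∈ Ilt r) (h : tau r s y < z) : y < s z := by
  obtain ⟨a, ha, haz⟩ := exists_lt_of_csInf_lt hne h
  exact lt_of_lt_of_le ha.2 (H.mono (Ilt_subset H ha.1) (Ilt_subset H hz) (le_of_lt haz))

lemma tau_le_of_forall (H : Good r I s) {y x₀ : ℝ} (hne : (Aset r s y).Nonempty)
    (hx₀ : 0 ≤ x₀) (h : ∀ w ∈ Ilt r, x₀ < w → w ∈ Aset r s y) : tau r s y ≤ x₀ := by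
  by_contra hc
  push_neg at hc
  set w := (x₀ + tau r s y) / 2 with hw
  have hw1 : x₀ < w := by rw [hw]; linarith
  have hw2 : w < tau r s y := by rw [hw]; linarith
  have hwIlt : w ∈ Ilt r :=
    mem_Ilt_of_le (tau_mem H hne) (le_trans hx₀ (le_of_lt hw1)) (le_of_lt hw2)
  exact absurd (tau_le (h w hwIlt hw1)) (not_le.2 hw2)

/-! ### sminus / splus -/

lemma sminus_zero (H : Good r I s) : sminus s I 0 = s 0 := by
  rw [sminus, if_neg]
  rintro ⟨z, hzI, hz⟩
  exact absurd (mem_I_nonneg H hzI) (not_le.2 hz)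

lemma sminus_eq_of_pos (H : Good r I s) {x : ℝ} (hx : 0 < x) :
    sminus s I x = sSup (s '' (I ∩ Set.Iio x)) := by
  rw [sminus, if_pos ⟨0, zero_mem_I H, hx⟩]

lemma bddAbove_left (H : Good r I s) {x : ℝ} (hx : x ∈ I) :
    BddAbove (s '' (I ∩ Set.Iio x)) :=
  ⟨s x, by rintro b ⟨z, ⟨hzI, hzx⟩, rfl⟩; exact H.mono hzI hx (le_of_lt hzx)⟩

lemma sminus_le_s (H : Good r I s) {x : ℝ} (hx : x ∈ I) : sminus s I x ≤ s x := by
  rw [sminus]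
  split_ifs with h
  · refine csSup_le (h.image s) ?_
    rintro b ⟨z, ⟨hzI, hzx⟩, rfl⟩
    exact H.mono hzI hx (le_of_lt hzx)
  · exact le_refl _

lemma s_le_sminus (H : Good r I s) {x z : ℝ} (hx : x ∈ I) (hz : z ∈ I) (hzx : z < x) :
    s z ≤ sminus s I x := by
  rw [sminus, if_pos ⟨z, hz, hzx⟩]
  exact le_csSup (bddAbove_left H hx) ⟨z, ⟨hz, hzx⟩, rfl⟩

lemma sminus_nonneg (H : Good r I s) {x : ℝ} (hx : x ∈ I) : 0 ≤ sminus s I x := by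
  rcases (mem_I_nonneg H hx).eq_or_lt with h | h
  · rw [← h, sminus_zero H, H.hs0]
  · have := s_le_sminus H hx (zero_mem_I H) h
    rwa [H.hs0] at this

lemma sminus_lub (H : Good r I s) {x c : ℝ} (hx : 0 < x)
    (h : ∀ z ∈ I ∩ Set.Iio x, s z ≤ c) : sminus s I x ≤ c := by
  rw [sminus_eq_of_pos H hx]
  refine csSup_le (Set.Nonempty.image s ⟨0, zero_mem_I H, hx⟩) ?_
  rintro b ⟨z, hz, rfl⟩
  exact h z hz

lemma exists_near_sminus (H : Good r I s) {x c : ℝ} (hx : 0 < x) (hc : c < sminus s I x) :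
    ∃ z, z ∈ I ∩ Set.Iio x ∧ c < s z := by
  rw [sminus_eq_of_pos H hx] at hc
  obtain ⟨b, ⟨z, hz, rfl⟩, hb⟩ := exists_lt_of_lt_csSup (Set.Nonempty.image s (⟨0, zero_mem_I H, hx⟩ : ∃ z, z ∈ I ∩ Set.Iio x)) hc
  exact ⟨z, hz, hb⟩

lemma splus_eq (H : Good r I s) {x : ℝ} (hx : x ∈ Ilt r) :
    splus s I x = sInf (s '' (I ∩ Set.Ioi x)) := by
  obtain ⟨w, hw, hxw⟩ := exists_gt_Ilt H hx
  rw [splus, if_pos ⟨w, Ilt_subset H hw, hxw⟩]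

lemma bddBelow_right (H : Good r I s) {x : ℝ} (hx : x ∈ I) :
    BddBelow (s '' (I ∩ Set.Ioi x)) :=
  ⟨s x, by rintro b ⟨z, ⟨hzI, hzx⟩, rfl⟩; exact H.mono hx hzI (le_of_lt hzx)⟩

lemma s_le_splus (H : Good r I s) {x : ℝ} (hx : x ∈ Ilt r) : s x ≤ splus s I x := by
  obtain ⟨w, hw, hxw⟩ := exists_gt_Ilt H hx
  rw [splus_eq H hx]
  refine le_csInf (Set.Nonempty.image s ⟨w, Ilt_subset H hw, hxw⟩) ?_
  rintro b ⟨z, ⟨hzI, hzx⟩, rfl⟩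
  exact H.mono (Ilt_subset H hx) hzI (le_of_lt hzx)

lemma splus_le_s (H : Good r I s) {x z : ℝ} (hx : x ∈ Ilt r) (hz : z ∈ I) (hxz : x < z) :
    splus s I x ≤ s z := by
  rw [splus_eq H hx]
  exact csInf_le (bddBelow_right H (Ilt_subset H hx)) ⟨z, ⟨hz, hxz⟩, rfl⟩

lemma splus_glb (H : Good r I s) {x c : ℝ} (hx : x ∈ Ilt r)
    (h : ∀ z ∈ I ∩ Set.Ioi x, c ≤ s z) : c ≤ splus s I x := by
  obtain ⟨w, hw, hxw⟩ := exists_gt_Ilt H hx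
  rw [splus_eq H hx]
  refine le_csInf (Set.Nonempty.image s ⟨w, Ilt_subset H hw, hxw⟩) ?_
  rintro b ⟨z, hz, rfl⟩
  exact h z hz

lemma exists_near_splus (H : Good r I s) {x c : ℝ} (hx : x ∈ Ilt r) (hc : splus s I x < c) :
    ∃ z, z ∈ I ∩ Set.Ioi x ∧ s z < c := by
  rw [splus_eq H hx] at hc
  obtain ⟨w, hw, hxw⟩ := exists_gt_Ilt H hx
  obtain ⟨b, ⟨z, hz, rfl⟩, hb⟩ :=
    exists_lt_of_csInf_lt (Set.Nonempty.image s (⟨w, Ilt_subset H hw, hxw⟩ : ∃ z, z ∈ I ∩ Set.Ioi x)) hc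
  exact ⟨z, hz, hb⟩

lemma splus_lt_rhat (H : Good r I s) {x : ℝ} (hx : x ∈ Ilt r) :
    ((splus s I x : ℝ) : EReal) < rhat s r := by
  obtain ⟨w, hw, hxw⟩ := exists_gt_Ilt H hx
  exact lt_of_le_of_lt (EReal.coe_le_coe_iff.2 (splus_le_s H hx (Ilt_subset H hw) hxw))
    (H.hslt w hw)

lemma splus_zero (H : Good r I s) : splus s I 0 = 0 := by
  rcases lt_or_ge 0 (splus s I 0) with h | h
  · exfalso
    have h1 : {z : ℝ | s z < splus s I 0} ∈ nhdsWithin (0:ℝ) (Set.Ioi 0) :=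
      H.hs0' (Iio_mem_nhds h)
    obtain ⟨w, hw, h0w⟩ := exists_gt_Ilt H (zero_mem_Ilt H)
    have h2 : Set.Ioo (0:ℝ) w ∈ nhdsWithin (0:ℝ) (Set.Ioi 0) := Ioo_mem_nhdsGT h0w
    obtain ⟨z, hz1, hz2⟩ := Filter.nonempty_of_mem (Filter.inter_mem h1 h2)
    have : splus s I 0 ≤ s z :=
      splus_le_s H (zero_mem_Ilt H) (Ilt_subset H (Ioo_subset_Ilt (le_refl 0) hw hz2)) hz2.1
    exact absurd hz1 (not_lt.2 this)
  · have := s_le_splus H (zero_mem_Ilt H)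
    rw [H.hs0] at this
    exact le_antisymm h this

/-! ### key inequalities for τ -/

lemma sminus_tau_le (H : Good r I s) {y : ℝ} (hy0 : 0 ≤ y)
    (hne : (Aset r s y).Nonempty) : sminus s I (tau r s y) ≤ y := by
  rcases (tau_nonneg H hne).eq_or_lt with h | h
  · rw [← h, sminus_zero H, H.hs0]; exact hy0
  · refine sminus_lub H h fun z hz => ?_
    exact s_le_of_lt_tau H (mem_Ilt_of_le (tau_mem H hne) (mem_I_nonneg H hz.1)
      (le_of_lt hz.2)) hz.2

lemma le_splus_tau (H : Good r I s) {y : ℝ} (hy : (y : EReal) < rhat s r) :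
    y ≤ splus s I (tau r s y) := by
  have hne := Aset_nonempty H hy
  refine splus_glb H (tau_mem H hne) fun z hz => ?_
  rcases mem_I_cases H hz.1 with h | h
  · exact le_of_lt (lt_s_of_tau_lt H hne h hz.2)
  · rw [← EReal.coe_le_coe_iff]
    exact le_of_lt (lt_of_lt_of_eq hy h.symm)

lemma tau_pos (H : Good r I s) {y : ℝ} (hy : 0 < y) (hylt : (y : EReal) < rhat s r) :
    0 < tau r s y := by
  have hne := Aset_nonempty H hylt
  have h1 : {z : ℝ | s z < y} ∈ nhdsWithin (0:ℝ) (Set.Ioi 0) := H.hs0' (Iio_mem_nhds hy)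
  obtain ⟨u, hu, husub⟩ := mem_nhdsGT_iff_exists_Ioc_subset.1 h1
  have : u ≤ tau r s y := by
    refine le_csInf hne fun z hz => ?_
    by_contra hc
    push_neg at hc
    have hz0 : 0 < z := by
      rcases (hz.1.1).eq_or_lt with h | h
      · exfalso
        have hyz : y < s z := hz.2
        rw [← h, H.hs0] at hyz
        exact absurd hyz (not_lt.2 (le_of_lt hy))
      · exact h
    exact absurd hz.2 (not_lt.2 (le_of_lt (husub ⟨hz0, le_of_lt hc⟩)))
  exact lt_of_lt_of_le hu this

/-! ### one-sided limits of s -/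

lemma tendsto_sminus (H : Good r I s) {x : ℝ} (hx : x ∈ Ilt r) (hx0 : 0 < x) :
    Filter.Tendsto s (nhdsWithin x (Set.Iio x)) (nhds (sminus s I x)) := by
  refine tendsto_order.2 ⟨fun a ha => ?_, fun a ha => ?_⟩
  · obtain ⟨z, ⟨hzI, hzx⟩, hz⟩ := exists_near_sminus H hx0 ha
    filter_upwards [Ioo_mem_nhdsLT hzx] with w hw
    exact lt_of_lt_of_le hz (H.mono hzI
      (Ilt_subset H (Ioo_subset_Ilt (mem_I_nonneg H hzI) hx hw)) (le_of_lt hw.1))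
  · filter_upwards [Ioo_mem_nhdsLT hx0] with w hw
    exact lt_of_le_of_lt (s_le_sminus H (Ilt_subset H hx)
      (Ilt_subset H (Ioo_subset_Ilt (le_refl 0) hx hw)) hw.2) ha

lemma tendsto_splus (H : Good r I s) {x : ℝ} (hx : x ∈ Ilt r) :
    Filter.Tendsto s (nhdsWithin x (Set.Ioi x)) (nhds (splus s I x)) := by
  refine tendsto_order.2 ⟨fun a ha => ?_, fun a ha => ?_⟩
  · obtain ⟨w, hw, hxw⟩ := exists_gt_Ilt H hx
    filter_upwards [Ioo_mem_nhdsGT hxw] with z hz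
    exact lt_of_lt_of_le ha (splus_le_s H hx
      (Ilt_subset H (Ioo_subset_Ilt hx.1 hw hz)) hz.1)
  · obtain ⟨z, ⟨hzI, hzx⟩, hz⟩ := exists_near_splus H hx ha
    filter_upwards [Ioo_mem_nhdsGT hzx] with w hw
    have hwIlt : w ∈ Ilt r := ⟨le_trans hx.1 (le_of_lt hw.1),
      lt_of_lt_of_le (EReal.coe_lt_coe_iff.2 hw.2) (mem_I_le_r H hzI)⟩
    exact lt_of_le_of_lt (H.mono (Ilt_subset H hwIlt) hzI (le_of_lt hw.2)) hz

/-! ### one-sided limits of f -/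

noncomputable def Fm (f : ℝ → ℝ) (x : ℝ) : ℝ := limUnder (nhdsWithin x (Set.Iio x)) f
noncomputable def Fp (f : ℝ → ℝ) (x : ℝ) : ℝ := limUnder (nhdsWithin x (Set.Ioi x)) f

lemma tendsto_Fm (hf : f ∈ Cs s r) {x : ℝ} (hx : x ∈ Ilt r) (hx0 : 0 < x) :
    Filter.Tendsto f (nhdsWithin x (Set.Iio x)) (nhds (Fm f x)) := by
  obtain ⟨L, hL⟩ := (hf.2.1 x hx0 hx.2).1
  rwa [Fm, hL.limUnder_eq]

lemma tendsto_Fp (hf : f ∈ Cs s r) {x : ℝ} (hx : x ∈ Ilt r) : 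
    Filter.Tendsto f (nhdsWithin x (Set.Ioi x)) (nhds (Fp f x)) := by
  rcases hx.1.eq_or_lt with h | h
  · subst h
    rw [Fp, hf.1.limUnder_eq]
    exact hf.1
  · obtain ⟨L, hL⟩ := (hf.2.1 x h hx.2).2
    rwa [Fp, hL.limUnder_eq]

lemma Fp_zero (hf : f ∈ Cs s r) : Fp f 0 = f 0 := hf.1.limUnder_eq

lemma Fm_eq_self (H : Good r I s) (hf : f ∈ Cs s r) {x : ℝ} (hx : x ∈ Ilt r) (hx0 : 0 < x)
    (h : sminus s I x = s x) : Fm f x = f x := by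
  have h1 := tendsto_sminus H hx hx0
  rw [h] at h1
  exact ((hf.2.2.1 x hx0 hx.2).2 h1).limUnder_eq

lemma Fp_eq_self (H : Good r I s) (hf : f ∈ Cs s r) {x : ℝ} (hx : x ∈ Ilt r) (hx0 : 0 < x)
    (h : splus s I x = s x) : Fp f x = f x := by
  have h1 := tendsto_splus H hx
  rw [h] at h1
  exact ((hf.2.2.1 x hx0 hx.2).1 h1).limUnder_eq

lemma Fm_const {x p v : ℝ} (hpx : p < x) (h : ∀ z ∈ Set.Ioo p x, f z = v) : Fm f x = v := by
  have : Filter.Tendsto f (nhdsWithin x (Set.Iio x)) (nhds v) :=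
    Filter.Tendsto.congr' (Filter.eventually_iff_exists_mem.2
      ⟨Set.Ioo p x, Ioo_mem_nhdsLT hpx, fun z hz => (h z hz).symm⟩) tendsto_const_nhds
  exact this.limUnder_eq

lemma Fp_const {x q v : ℝ} (hxq : x < q) (h : ∀ z ∈ Set.Ioo x q, f z = v) : Fp f x = v := by
  have : Filter.Tendsto f (nhdsWithin x (Set.Ioi x)) (nhds v) :=
    Filter.Tendsto.congr' (Filter.eventually_iff_exists_mem.2
      ⟨Set.Ioo x q, Ioo_mem_nhdsGT hxq, fun z hz => (h z hz).symm⟩) tendsto_const_nhds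
  exact this.limUnder_eq

lemma Fm_abs_le (hf : f ∈ Cs s r) {x L ε : ℝ} (hx : x ∈ Ilt r) (hx0 : 0 < x)
    (hev : ∀ᶠ z in nhdsWithin x (Set.Iio x), |f z - L| ≤ ε) : |Fm f x - L| ≤ ε :=
  le_of_tendsto (((tendsto_Fm hf hx hx0).sub_const L).abs) hev

lemma Fp_abs_le (hf : f ∈ Cs s r) {x L ε : ℝ} (hx : x ∈ Ilt r)
    (hev : ∀ᶠ z in nhdsWithin x (Set.Ioi x), |f z - L| ≤ ε) : |Fp f x - L| ≤ ε :=
  le_of_tendsto (((tendsto_Fp hf hx).sub_const L).abs) hev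

/-! ### the construction -/

noncomputable def hatf (r : EReal) (I : Set ℝ) (s : ℝ → ℝ) (f : ℝ → ℝ) (y : ℝ) : ℝ :=
  if tau r s y = 0 then f 0
  else if y ≤ s (tau r s y) then
    Fm f (tau r s y) +
      ((y - sminus s I (tau r s y)) / (s (tau r s y) - sminus s I (tau r s y))) *
        (f (tau r s y) - Fm f (tau r s y))
  else
    f (tau r s y) +
      ((y - s (tau r s y)) / (splus s I (tau r s y) - s (tau r s y))) *
        (Fp f (tau r s y) - f (tau r s y))

lemma convex_abs {u v L ε t : ℝ} (ht0 : 0 ≤ t) (ht1 : t ≤ 1)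
    (hu : |u - L| ≤ ε) (hv : |v - L| ≤ ε) : |u + t * (v - u) - L| ≤ ε := by
  have h : u + t * (v - u) - L = (1 - t) * (u - L) + t * (v - L) := by ring
  rw [h]
  calc |(1 - t) * (u - L) + t * (v - L)| ≤ |(1 - t) * (u - L)| + |t * (v - L)| := abs_add_le _ _
    _ = (1 - t) * |u - L| + t * |v - L| := by
        rw [abs_mul, abs_mul, abs_of_nonneg (by linarith : (0:ℝ) ≤ 1 - t), abs_of_nonneg ht0]
    _ ≤ (1 - t) * ε + t * ε := by
        have h1 : (0:ℝ) ≤ 1 - t := by linarith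
        exact add_le_add (mul_le_mul_of_nonneg_left hu h1) (mul_le_mul_of_nonneg_left hv ht0)
    _ = ε := by ring

/-- KEY approximation lemma: if the one-sided data of `f` at `τ y` is `ε`-close
to `L`, then so is `hatf y`. -/
lemma hatf_abs_le (H : Good r I s) (hf : f ∈ Cs s r) {y L ε : ℝ} (hy0 : 0 ≤ y)
    (hylt : (y : EReal) < rhat s r) (htau : 0 < tau r s y)
    (h1 : |Fm f (tau r s y) - L| ≤ ε) (h2 : |f (tau r s y) - L| ≤ ε)
    (h3 : |Fp f (tau r s y) - L| ≤ ε) : |hatf r I s f y - L| ≤ ε := by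
  have hne := Aset_nonempty H hylt
  set x₁ := tau r s y with hx₁
  have hK1 : sminus s I x₁ ≤ y := sminus_tau_le H hy0 hne
  have hK2 : y ≤ splus s I x₁ := le_splus_tau H hylt
  rw [hatf, if_neg (ne_of_gt htau)]
  split_ifs with hb
  · -- y ≤ s x₁, value Fm + t (f - Fm)
    rcases eq_or_lt_of_le (le_trans hK1 hb) with hab | hab
    · -- sminus = s x₁, so y = both and the ratio is damaged but num is 0
      have hya : y = sminus s I x₁ := le_antisymm (by rw [hab]; exact hb) hK1
      rw [← hya]
      simp only [sub_self, zero_div, zero_mul, add_zero]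
      exact h1
    · have hden : (0:ℝ) < s x₁ - sminus s I x₁ := by linarith
      have ht0 : 0 ≤ (y - sminus s I x₁) / (s x₁ - sminus s I x₁) :=
        div_nonneg (by linarith) (le_of_lt hden)
      have ht1 : (y - sminus s I x₁) / (s x₁ - sminus s I x₁) ≤ 1 :=
        (div_le_one hden).2 (by linarith)
      exact convex_abs ht0 ht1 h1 h2
  · push_neg at hb
    have hden : (0:ℝ) < splus s I x₁ - s x₁ := by linarith
    have ht0 : 0 ≤ (y - s x₁) / (splus s I x₁ - s x₁) := div_nonneg (by linarith) hden.le
    have ht1 : (y - s x₁) / (splus s I x₁ - s x₁) ≤ 1 := (div_le_one hden).2 (by linarith)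
    exact convex_abs ht0 ht1 h2 h3

lemma f_eq_of_s_eq (hf : f ∈ Cs s r) {z w : ℝ} (hz0 : 0 ≤ z) (hw0 : 0 ≤ w)
    (hzr : (z : EReal) < r) (hwr : (w : EReal) < r) (h : s z = s w) : f z = f w := by
  rcases le_total z w with h' | h'
  · exact hf.2.2.2 z w hz0 h' hwr h
  · exact (hf.2.2.2 w z hw0 h' hzr h.symm).symm

lemma hatf_eq0 {y : ℝ} (h0 : tau r s y = 0) : hatf r I s f y = f 0 := by
  rw [hatf, if_pos h0]

lemma hatf_eq1 {y x₀ : ℝ} (hx₀ : tau r s y = x₀) (h0 : x₀ ≠ 0) (hb : y ≤ s x₀) :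
    hatf r I s f y = Fm f x₀ +
      ((y - sminus s I x₀) / (s x₀ - sminus s I x₀)) * (f x₀ - Fm f x₀) := by
  subst hx₀; rw [hatf, if_neg h0, if_pos hb]

lemma hatf_eq2 {y x₀ : ℝ} (hx₀ : tau r s y = x₀) (h0 : x₀ ≠ 0) (hb : ¬ y ≤ s x₀) :
    hatf r I s f y = f x₀ +
      ((y - s x₀) / (splus s I x₀ - s x₀)) * (Fp f x₀ - f x₀) := by
  subst hx₀; rw [hatf, if_neg h0, if_neg hb]

/-- MatchRel, clause 1. -/
lemma hatf_s (H : Good r I s) (hf : f ∈ Cs s r) {x : ℝ} (hx : x ∈ Ilt r) :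
    hatf r I s f (s x) = f x := by
  set y := s x with hy
  have hy0 : 0 ≤ y := s_nonneg H (Ilt_subset H hx)
  have hylt : (y : EReal) < rhat s r := H.hslt x hx
  have hne := Aset_nonempty H hylt
  obtain ⟨x₀, hx₀def⟩ : ∃ t, tau r s y = t := ⟨_, rfl⟩
  have hxle : x ≤ x₀ := by
    rw [← hx₀def]
    refine le_csInf hne fun z hz => ?_
    by_contra hc
    push_neg at hc
    exact absurd hz.2 (not_lt.2 (H.mono (Ilt_subset H hz.1) (Ilt_subset H hx) hc.le))
  have hK1 : sminus s I x₀ ≤ y := hx₀def ▸ sminus_tau_le H hy0 hne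
  have htau0 : 0 ≤ x₀ := hx₀def ▸ tau_nonneg H hne
  rcases htau0.eq_or_lt with h0 | h0
  · have hx0 : x = 0 := le_antisymm (h0 ▸ hxle) hx.1
    rw [hatf_eq0 (hx₀def.trans h0.symm), hx0]
  · have hx₀mem : x₀ ∈ Ilt r := hx₀def ▸ tau_mem H hne
    have hb : y ≤ s x₀ := H.mono (Ilt_subset H hx) (Ilt_subset H hx₀mem) hxle
    rw [hatf_eq1 hx₀def (ne_of_gt h0) hb]
    rcases eq_or_lt_of_le hb with hyb | hyb
    · -- y = s x₀
      have hfx : f x = f x₀ := hf.2.2.2 x x₀ hx.1 hxle hx₀mem.2 hyb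
      rcases eq_or_lt_of_le (le_trans hK1 hb) with hab | hab
      · have hya : y - sminus s I x₀ = 0 := by
          have : y = sminus s I x₀ := le_antisymm (by rw [hab]; exact hb) hK1
          linarith
        rw [hya]
        simp only [zero_div, zero_mul, add_zero]
        rw [Fm_eq_self H hf hx₀mem h0 hab]
        exact hfx.symm
      · have h1 : (y - sminus s I x₀) / (s x₀ - sminus s I x₀) = 1 := by
          rw [← hyb] at hab ⊢
          exact div_self (ne_of_gt (by linarith))
        rw [h1, one_mul]
        rw [hfx]; ring
    · -- y < s x₀, so x < x₀ and sminus x₀ = y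
      have hxlt : x < x₀ := by
        rcases eq_or_lt_of_le hxle with h | h
        · exfalso; rw [← h, ← hy] at hyb; exact lt_irrefl _ hyb
        · exact h
      have hya : y - sminus s I x₀ = 0 := by
        have := le_antisymm (s_le_sminus H (Ilt_subset H hx₀mem) (Ilt_subset H hx) hxlt) hK1
        linarith
      rw [hya]
      simp only [zero_div, zero_mul, add_zero]
      refine Fm_const hxlt fun z hz => ?_
      have hzIlt : z ∈ Ilt r := Ioo_subset_Ilt hx.1 hx₀mem hz
      have hsz : s z = s x :=
        le_antisymm (s_le_of_lt_tau H hzIlt (hx₀def ▸ hz.2))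
          (H.mono (Ilt_subset H hx) (Ilt_subset H hzIlt) hz.1.le)
      exact f_eq_of_s_eq hf hzIlt.1 hx.1 hzIlt.2 hx.2 hsz

/-- MatchRel, clause 2. -/
lemma hatf_sminus (H : Good r I s) (hf : f ∈ Cs s r) {x : ℝ} (hx : x ∈ Ilt r) (hx0 : 0 < x)
    {L : ℝ} (hL : Filter.Tendsto f (nhdsWithin x (Set.Iio x)) (nhds L)) :
    hatf r I s f (sminus s I x) = L := by
  have hFmx : Fm f x = L := hL.limUnder_eq
  rw [← hFmx]
  set y := sminus s I x with hy
  have hy0 : 0 ≤ y := sminus_nonneg H (Ilt_subset H hx)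
  have hylt : (y : EReal) < rhat s r :=
    lt_of_le_of_lt (EReal.coe_le_coe_iff.2 (sminus_le_s H (Ilt_subset H hx))) (H.hslt x hx)
  have hne := Aset_nonempty H hylt
  obtain ⟨x₀, hx₀def⟩ : ∃ t, tau r s y = t := ⟨_, rfl⟩
  have hxle : x ≤ x₀ := by
    rw [← hx₀def]
    refine le_csInf hne fun z hz => ?_
    by_contra hc
    push_neg at hc
    exact absurd hz.2 (not_lt.2 (s_le_sminus H (Ilt_subset H hx) (Ilt_subset H hz.1) hc))
  have h0 : 0 < x₀ := lt_of_lt_of_le hx0 hxle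
  have hx₀mem : x₀ ∈ Ilt r := hx₀def ▸ tau_mem H hne
  have hK1 : sminus s I x₀ ≤ y := hx₀def ▸ sminus_tau_le H hy0 hne
  rcases eq_or_lt_of_le hxle with heq | hlt
  · -- x = x₀
    have hya : y - sminus s I x₀ = 0 := by rw [hy, heq]; ring
    have hb : y ≤ s x₀ := by rw [hy, heq]; exact sminus_le_s H (Ilt_subset H hx₀mem)
    rw [hatf_eq1 hx₀def (ne_of_gt h0) hb, hya]
    simp only [zero_div, zero_mul, add_zero]
    rw [← heq]
  · -- x < x₀ : s is constant ≡ y on [x, x₀)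
    have hsx : s x = y :=
      le_antisymm (s_le_of_lt_tau H hx (hx₀def ▸ hlt)) (sminus_le_s H (Ilt_subset H hx))
    have hya : y - sminus s I x₀ = 0 := by
      have h1 : y ≤ sminus s I x₀ := by
        rw [← hsx]
        exact s_le_sminus H (Ilt_subset H hx₀mem) (Ilt_subset H hx) hlt
      linarith
    have hb : y ≤ s x₀ := by
      rw [← hsx]
      exact H.mono (Ilt_subset H hx) (Ilt_subset H hx₀mem) hxle
    rw [hatf_eq1 hx₀def (ne_of_gt h0) hb, hya]
    simp only [zero_div, zero_mul, add_zero]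
    have hconst : ∀ z ∈ Set.Ioo x x₀, f z = f x := by
      intro z hz
      have hzIlt : z ∈ Ilt r := Ioo_subset_Ilt hx.1 hx₀mem hz
      have hsz : s z = s x := by
        refine le_antisymm ?_ (H.mono (Ilt_subset H hx) (Ilt_subset H hzIlt) hz.1.le)
        rw [hsx]
        exact s_le_of_lt_tau H hzIlt (hx₀def ▸ hz.2)
      exact f_eq_of_s_eq hf hzIlt.1 hx.1 hzIlt.2 hx.2 hsz
    rw [Fm_const hlt hconst]
    exact (Fm_eq_self H hf hx hx0 (by rw [← hy, hsx])).symm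

/-- value of `hatf` at an attained `splus (tau y) = y`. -/
lemma hatf_splus_self (H : Good r I s) (hf : f ∈ Cs s r) {y : ℝ} (hy0 : 0 ≤ y)
    (hylt : (y : EReal) < rhat s r) (h : splus s I (tau r s y) = y) :
    hatf r I s f y = Fp f (tau r s y) := by
  have hne := Aset_nonempty H hylt
  obtain ⟨x₀, hx₀def⟩ : ∃ t, tau r s y = t := ⟨_, rfl⟩
  rw [hx₀def] at h ⊢
  have hx₀mem : x₀ ∈ Ilt r := hx₀def ▸ tau_mem H hne
  have hK1 : sminus s I x₀ ≤ y := hx₀def ▸ sminus_tau_le H hy0 hne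
  rcases (hx₀def ▸ tau_nonneg H hne : (0:ℝ) ≤ x₀).eq_or_lt with h0 | h0
  · -- x₀ = 0, then y = splus 0 = 0
    rw [hatf_eq0 (hx₀def.trans h0.symm), ← h0, Fp_zero hf]
  · by_cases hb : y ≤ s x₀
    · -- y ≤ s x₀ together with s x₀ ≤ splus x₀ = y forces y = s x₀ = splus x₀
      have hsy : s x₀ = y := le_antisymm (by rw [← h]; exact s_le_splus H hx₀mem) hb
      have hFp : Fp f x₀ = f x₀ := Fp_eq_self H hf hx₀mem h0 (by rw [h, hsy])
      rw [hatf_eq1 hx₀def (ne_of_gt h0) hb, hFp]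
      rcases eq_or_lt_of_le (le_trans hK1 hb) with hab | hab
      · have hya : y - sminus s I x₀ = 0 := by
          have : y = sminus s I x₀ := le_antisymm (by rw [hab]; exact hb) hK1
          linarith
        rw [hya]
        simp only [zero_div, zero_mul, add_zero]
        exact Fm_eq_self H hf hx₀mem h0 hab
      · have h1 : (y - sminus s I x₀) / (s x₀ - sminus s I x₀) = 1 := by
          rw [← hsy]
          exact div_self (ne_of_gt (by linarith))
        rw [h1]; ring
    · push_neg at hb
      rw [hatf_eq2 hx₀def (ne_of_gt h0) (not_le.2 hb), h,
        div_self (ne_of_gt (by linarith))]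
      ring

/-- MatchRel, clause 3. -/
lemma hatf_splus (H : Good r I s) (hf : f ∈ Cs s r) {x : ℝ} (hx : x ∈ Ilt r) (hx0 : 0 < x)
    (hcl : ((splus s I x : ℝ) : EReal) < rhat s r)
    {L : ℝ} (hL : Filter.Tendsto f (nhdsWithin x (Set.Ioi x)) (nhds L)) :
    hatf r I s f (splus s I x) = L := by
  have hFpx : Fp f x = L := hL.limUnder_eq
  rw [← hFpx]
  set y := splus s I x with hy
  have hsxy : s x ≤ y := s_le_splus H hx
  have hy0 : 0 ≤ y := le_trans (s_nonneg H (Ilt_subset H hx)) hsxy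
  have hne := Aset_nonempty H hcl
  obtain ⟨x₀, hx₀def⟩ : ∃ t, tau r s y = t := ⟨_, rfl⟩
  have hxle : x ≤ x₀ := by
    rw [← hx₀def]
    refine le_csInf hne fun z hz => ?_
    by_contra hc
    push_neg at hc
    exact absurd hz.2 (not_lt.2 (le_trans
      (H.mono (Ilt_subset H hz.1) (Ilt_subset H hx) hc.le) hsxy))
  have h0 : 0 < x₀ := lt_of_lt_of_le hx0 hxle
  have hx₀mem : x₀ ∈ Ilt r := hx₀def ▸ tau_mem H hne
  have hK1 : sminus s I x₀ ≤ y := hx₀def ▸ sminus_tau_le H hy0 hne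
  rcases eq_or_lt_of_le hxle with heq | hlt
  · rw [hatf_splus_self H hf hy0 hcl (by rw [hx₀def, ← heq, ← hy]), hx₀def, ← heq]
  · -- x < x₀ : s ≡ y on (x, x₀)
    have hmid : (x + x₀) / 2 ∈ Set.Ioo x x₀ := ⟨by linarith, by linarith⟩
    have hsconst : ∀ z ∈ Set.Ioo x x₀, s z = y := by
      intro z hz
      have hzIlt : z ∈ Ilt r := Ioo_subset_Ilt hx.1 hx₀mem hz
      exact le_antisymm (s_le_of_lt_tau H hzIlt (hx₀def ▸ hz.2))
        (splus_le_s H hx (Ilt_subset H hzIlt) hz.1)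
    have hfconst : ∀ z ∈ Set.Ioo x x₀, f z = f ((x + x₀) / 2) := by
      intro z hz
      have hzIlt : z ∈ Ilt r := Ioo_subset_Ilt hx.1 hx₀mem hz
      have hmIlt : (x + x₀) / 2 ∈ Ilt r := Ioo_subset_Ilt hx.1 hx₀mem hmid
      exact f_eq_of_s_eq hf hzIlt.1 hmIlt.1 hzIlt.2 hmIlt.2
        (by rw [hsconst z hz, hsconst _ hmid])
    have hya : y - sminus s I x₀ = 0 := by
      have h1 : y ≤ sminus s I x₀ := by
        rw [← hsconst _ hmid]
        exact s_le_sminus H (Ilt_subset H hx₀mem)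
          (Ilt_subset H (Ioo_subset_Ilt hx.1 hx₀mem hmid)) hmid.2
      linarith
    have hb : y ≤ s x₀ := by
      rw [← hsconst _ hmid]
      exact H.mono (Ilt_subset H (Ioo_subset_Ilt hx.1 hx₀mem hmid)) (Ilt_subset H hx₀mem)
        hmid.2.le
    rw [hatf_eq1 hx₀def (ne_of_gt h0) hb, hya]
    simp only [zero_div, zero_mul, add_zero]
    rw [Fm_const (show x < x₀ from hlt) hfconst]
    exact (Fp_const (show x < (x + x₀) / 2 by linarith)
      (fun z hz => hfconst z ⟨hz.1, lt_trans hz.2 hmid.2⟩)).symm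

/-! ### σ: the left companion of τ -/

def Bset (r : EReal) (s : ℝ → ℝ) (y : ℝ) : Set ℝ := {z : ℝ | z ∈ Ilt r ∧ y ≤ s z}

noncomputable def sigm (r : EReal) (s : ℝ → ℝ) (y : ℝ) : ℝ := sInf (Bset r s y)

lemma Bset_bddBelow {y : ℝ} : BddBelow (Bset r s y) := ⟨0, fun z hz => hz.1.1⟩

lemma Bset_nonempty (H : Good r I s) {y : ℝ} (hy : (y : EReal) < rhat s r) :
    (Bset r s y).Nonempty := by
  obtain ⟨z, hz⟩ := Aset_nonempty H hy
  exact ⟨z, hz.1, hz.2.le⟩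

lemma sigm_le {y z : ℝ} (hz : z ∈ Bset r s y) : sigm r s y ≤ z := csInf_le Bset_bddBelow hz

lemma sigm_mem (H : Good r I s) {y : ℝ} (hne : (Bset r s y).Nonempty) :
    sigm r s y ∈ Ilt r := by
  obtain ⟨z, hz⟩ := id hne
  exact ⟨le_csInf hne fun w hw => hw.1.1,
    lt_of_le_of_lt (EReal.coe_le_coe_iff.2 (sigm_le hz)) hz.1.2⟩

lemma s_lt_of_lt_sigm (H : Good r I s) {y z : ℝ} (hz : z ∈ Ilt r) (h : z < sigm r s y) :
    s z < y := by
  by_contra hc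
  push_neg at hc
  exact absurd (sigm_le ⟨hz, hc⟩) (not_le.2 h)

lemma le_s_of_sigm_lt (H : Good r I s) {y z : ℝ} (hne : (Bset r s y).Nonempty)
    (hz : z ∈ Ilt r) (h : sigm r s y < z) : y ≤ s z := by
  obtain ⟨a, ha, haz⟩ := exists_lt_of_csInf_lt hne h
  exact le_trans ha.2 (H.mono (Ilt_subset H ha.1) (Ilt_subset H hz) (le_of_lt haz))

lemma sminus_sigm_le (H : Good r I s) {y : ℝ} (hy0 : 0 ≤ y)
    (hne : (Bset r s y).Nonempty) : sminus s I (sigm r s y) ≤ y := by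
  have h0 : (0:ℝ) ≤ sigm r s y := le_csInf hne fun z hz => hz.1.1
  rcases h0.eq_or_lt with h | h
  · rw [← h, sminus_zero H, H.hs0]; exact hy0
  · refine sminus_lub H h fun z hz => ?_
    exact le_of_lt (s_lt_of_lt_sigm H (mem_Ilt_of_le (sigm_mem H hne) (mem_I_nonneg H hz.1)
      (le_of_lt hz.2)) hz.2)

lemma le_splus_sigm (H : Good r I s) {y : ℝ} (hy : (y : EReal) < rhat s r) :
    y ≤ splus s I (sigm r s y) := by
  have hne := Bset_nonempty H hy
  refine splus_glb H (sigm_mem H hne) fun z hz => ?_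
  rcases mem_I_cases H hz.1 with h | h
  · exact le_s_of_sigm_lt H hne h hz.2
  · rw [← EReal.coe_le_coe_iff]
    exact le_of_lt (lt_of_lt_of_eq hy h.symm)

lemma sigm_pos (H : Good r I s) {y : ℝ} (hy : 0 < y) (hylt : (y : EReal) < rhat s r) :
    0 < sigm r s y := by
  have hne := Bset_nonempty H hylt
  have h0 : (0:ℝ) ≤ sigm r s y := le_csInf hne fun z hz => hz.1.1
  rcases h0.eq_or_lt with h | h
  · exfalso
    have := le_splus_sigm H hylt
    rw [← h, splus_zero H] at this
    exact absurd this (not_le.2 hy)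
  · exact h

lemma sigm_le_tau (H : Good r I s) {y : ℝ} (hne : (Aset r s y).Nonempty) :
    sigm r s y ≤ tau r s y :=
  le_csInf hne fun z hz => sigm_le ⟨hz.1, hz.2.le⟩

/-! ### affine convergence helpers -/

lemma tendsto_left_of_affine {g : ℝ → ℝ} {p y₀ α β : ℝ} (hp : p < y₀)
    (hopen : ∀ y' ∈ Set.Ioo p y₀, g y' = α + β * y') (hval : g y₀ = α + β * y₀) :
    Filter.Tendsto g (nhdsWithin y₀ (Set.Iio y₀)) (nhds (g y₀)) := by
  have hc : Filter.Tendsto (fun y' => α + β * y') (nhdsWithin y₀ (Set.Iio y₀))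
      (nhds (α + β * y₀)) :=
    ((continuous_const.add (continuous_const.mul continuous_id)).tendsto y₀).mono_left
      nhdsWithin_le_nhds
  rw [hval]
  refine hc.congr' ?_
  filter_upwards [Ioo_mem_nhdsLT hp] with y' hy'
  exact (hopen y' hy').symm

lemma tendsto_right_of_affine {g : ℝ → ℝ} {q y₀ α β : ℝ} (hq : y₀ < q)
    (hopen : ∀ y' ∈ Set.Ico y₀ q, g y' = α + β * y') :
    Filter.Tendsto g (nhdsWithin y₀ (Set.Ioi y₀)) (nhds (g y₀)) := by
  have hc : Filter.Tendsto (fun y' => α + β * y') (nhdsWithin y₀ (Set.Ioi y₀))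
      (nhds (α + β * y₀)) :=
    ((continuous_const.add (continuous_const.mul continuous_id)).tendsto y₀).mono_left
      nhdsWithin_le_nhds
  rw [hopen y₀ ⟨le_refl y₀, hq⟩]
  refine hc.congr' ?_
  filter_upwards [Ioo_mem_nhdsGT hq] with y' hy'
  exact (hopen y' ⟨hy'.1.le, hy'.2⟩).symm

/-- abs-closeness from a tendsto statement. -/
lemma abs_eventually_of_tendsto {g : ℝ → ℝ} {l : Filter ℝ} {L ε : ℝ} (hε : 0 < ε)
    (h : Filter.Tendsto g l (nhds L)) : ∀ᶠ z in l, |g z - L| ≤ ε := by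
  have hmem : {w : ℝ | |w - L| ≤ ε} ∈ nhds L := by
    refine Filter.mem_of_superset (Metric.ball_mem_nhds L hε) fun w hw => ?_
    rw [Metric.mem_ball, Real.dist_eq] at hw
    exact le_of_lt hw
  exact h hmem

/-- Right-continuity of `hatf` on `[0, r̂)`. -/
lemma tendsto_hatf_right (H : Good r I s) (hf : f ∈ Cs s r) {y₀ : ℝ} (hy0 : 0 ≤ y₀)
    (hylt : (y₀ : EReal) < rhat s r) :
    Filter.Tendsto (hatf r I s f) (nhdsWithin y₀ (Set.Ioi y₀))
      (nhds (hatf r I s f y₀)) := by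
  have hne := Aset_nonempty H hylt
  obtain ⟨x₀, hx₀def⟩ : ∃ t, tau r s y₀ = t := ⟨_, rfl⟩
  have hx₀mem : x₀ ∈ Ilt r := hx₀def ▸ tau_mem H hne
  have hx₀0 : 0 ≤ x₀ := hx₀def ▸ tau_nonneg H hne
  have hc : y₀ ≤ splus s I x₀ := hx₀def ▸ le_splus_tau H hylt
  have htc : ∀ {y' : ℝ}, y₀ ≤ y' → (∀ z ∈ Aset r s y', x₀ ≤ z) := by
    intro y' hy' z hz
    exact hx₀def ▸ tau_le ⟨hz.1, lt_of_le_of_lt hy' hz.2⟩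
  rcases eq_or_lt_of_le hc with heq | hlt
  · -- ε/δ case : `y₀ = splus x₀`
    have hval : hatf r I s f y₀ = Fp f x₀ :=
      hx₀def ▸ hatf_splus_self H hf hy0 hylt (by rw [hx₀def, ← heq])
    rw [Metric.tendsto_nhdsWithin_nhds]
    intro ε hε
    have hev : ∀ᶠ z in nhdsWithin x₀ (Set.Ioi x₀), |f z - Fp f x₀| ≤ ε / 2 :=
      abs_eventually_of_tendsto (half_pos hε) (tendsto_Fp hf hx₀mem)
    obtain ⟨q, hq, hqsub⟩ := mem_nhdsGT_iff_exists_Ioo_subset.1 hev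
    obtain ⟨w₂, hw₂mem, hx₀w₂⟩ := exists_gt_Ilt H hx₀mem
    set w := min ((x₀ + q) / 2) ((x₀ + w₂) / 2) with hwdef
    have hq' : x₀ < q := hq
    have hx₀w : x₀ < w := lt_min (by linarith) (by linarith)
    have hwq : w < q := lt_of_le_of_lt (min_le_left _ _) (by linarith)
    have hww₂ : w < w₂ := lt_of_le_of_lt (min_le_right _ _) (by linarith)
    have hwIlt : w ∈ Ilt r := mem_Ilt_of_le hw₂mem (le_trans hx₀0 hx₀w.le) hww₂.le
    have hsw : y₀ < s w := lt_s_of_tau_lt H hne hwIlt (hx₀def ▸ hx₀w)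
    refine ⟨s w - y₀, by linarith, ?_⟩
    intro y' hy'mem hy'dist
    have hy'gt : y₀ < y' := hy'mem
    have hy'lt : y' < s w := by
      rw [Real.dist_eq] at hy'dist
      have := abs_lt.1 hy'dist
      linarith [this.1, this.2]
    have hy'0 : 0 ≤ y' := le_trans hy0 hy'gt.le
    have hy'rhat : (y' : EReal) < rhat s r :=
      lt_trans (EReal.coe_lt_coe_iff.2 hy'lt) (H.hslt w hwIlt)
    have hne' := Aset_nonempty H hy'rhat
    obtain ⟨x₁, hx₁def⟩ : ∃ t, tau r s y' = t := ⟨_, rfl⟩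
    have hx₁ge : x₀ ≤ x₁ := hx₁def ▸ le_csInf hne' (htc hy'gt.le)
    have hx₁le : x₁ ≤ w := hx₁def ▸ tau_le ⟨hwIlt, hy'lt⟩
    have hx₁ne : x₀ ≠ x₁ := by
      intro hcontra
      have := hx₁def ▸ le_splus_tau H hy'rhat
      rw [← hcontra, ← heq] at this
      exact absurd this (not_le.2 hy'gt)
    have hx₁gt : x₀ < x₁ := lt_of_le_of_ne hx₁ge hx₁ne
    have hx₁mem : x₁ ∈ Ilt r := hx₁def ▸ tau_mem H hne'
    have hx₁pos : 0 < x₁ := lt_of_le_of_lt hx₀0 hx₁gt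
    have hb2 : |f x₁ - Fp f x₀| ≤ ε / 2 := hqsub ⟨hx₁gt, lt_of_le_of_lt hx₁le hwq⟩
    have hb1 : |Fm f x₁ - Fp f x₀| ≤ ε / 2 := by
      refine Fm_abs_le hf hx₁mem hx₁pos ?_
      filter_upwards [Ioo_mem_nhdsLT hx₁gt] with z hz
      exact hqsub ⟨hz.1, lt_trans hz.2 (lt_of_le_of_lt hx₁le hwq)⟩
    have hb3 : |Fp f x₁ - Fp f x₀| ≤ ε / 2 := by
      refine Fp_abs_le hf hx₁mem ?_
      filter_upwards [Ioo_mem_nhdsGT (lt_of_le_of_lt hx₁le hwq)] with z hz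
      exact hqsub ⟨lt_trans hx₁gt hz.1, hz.2⟩
    have hkey := hatf_abs_le H hf hy'0 hy'rhat (hx₁def ▸ hx₁pos)
      (hx₁def ▸ hb1) (hx₁def ▸ hb2) (hx₁def ▸ hb3)
    rw [Real.dist_eq, hval]
    exact lt_of_le_of_lt hkey (by linarith)
  · -- affine case : `y₀ < splus x₀`
    have hx₀pos : 0 < x₀ := by
      rcases hx₀0.eq_or_lt with h | h
      · exfalso
        have h2 : splus s I x₀ = 0 := by rw [← h]; exact splus_zero H
        rw [h2] at hlt
        exact absurd hlt (not_lt.2 hy0)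
      · exact h
    have htaueq : ∀ {y' : ℝ}, y₀ ≤ y' → y' < splus s I x₀ → tau r s y' = x₀ := by
      intro y' h1 h2
      have hy'rhat : (y' : EReal) < rhat s r :=
        lt_of_lt_of_le (EReal.coe_lt_coe_iff.2 h2)
          (le_of_lt (splus_lt_rhat H hx₀mem))
      have hne' := Aset_nonempty H hy'rhat
      refine le_antisymm ?_ (le_csInf hne' (htc h1))
      refine tau_le_of_forall H hne' hx₀0 fun z hz hx₀z => ⟨hz, ?_⟩
      exact lt_of_lt_of_le h2 (splus_le_s H hx₀mem (Ilt_subset H hz) hx₀z)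
    by_cases hby : y₀ < s x₀
    · -- branch-1 affine on [y₀, s x₀)
      refine tendsto_right_of_affine (α := Fm f x₀ - (f x₀ - Fm f x₀) /
          (s x₀ - sminus s I x₀) * sminus s I x₀)
        (β := (f x₀ - Fm f x₀) / (s x₀ - sminus s I x₀)) hby ?_
      intro y' hy'
      have h2 : y' < splus s I x₀ := lt_of_lt_of_le hy'.2 (s_le_splus H hx₀mem)
      rw [hatf_eq1 (htaueq hy'.1 h2) (ne_of_gt hx₀pos) hy'.2.le]
      ring
    · -- branch-2 affine on [y₀, splus x₀)
      push_neg at hby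
      refine tendsto_right_of_affine (α := f x₀ - (Fp f x₀ - f x₀) /
          (splus s I x₀ - s x₀) * s x₀)
        (β := (Fp f x₀ - f x₀) / (splus s I x₀ - s x₀)) hlt ?_
      intro y' hy'
      have hy'rhat : (y' : EReal) < rhat s r :=
        lt_of_lt_of_le (EReal.coe_lt_coe_iff.2 hy'.2) (le_of_lt (splus_lt_rhat H hx₀mem))
      have hne' := Aset_nonempty H hy'rhat
      rcases eq_or_lt_of_le (le_trans hby hy'.1) with hsy' | hsy'
      · -- y' = s x₀ : branch 1 value is f x₀
        have hval1 : hatf r I s f y' = f x₀ := by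
          rw [hatf_eq1 (htaueq hy'.1 hy'.2) (ne_of_gt hx₀pos) hsy'.ge]
          have hK1 : sminus s I x₀ ≤ y' := by
            have h2 := sminus_tau_le H (le_trans hy0 hy'.1) hne'
            rwa [htaueq hy'.1 hy'.2] at h2
          rcases eq_or_lt_of_le hK1 with hab | hab
          · have hnum : y' - sminus s I x₀ = 0 := by rw [hab]; ring
            rw [hnum]
            simp only [zero_div, zero_mul, add_zero]
            exact Fm_eq_self H hf hx₀mem hx₀pos (by rw [hab, hsy'])
          · have h1 : (y' - sminus s I x₀) / (s x₀ - sminus s I x₀) = 1 := by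
              rw [← hsy']
              exact div_self (ne_of_gt (by linarith))
            rw [h1]; ring
        rw [hval1, ← hsy']
        ring
      · rw [hatf_eq2 (htaueq hy'.1 hy'.2) (ne_of_gt hx₀pos) (not_le.2 hsy')]
        ring

/-- Left-continuity of `hatf` on `(0, r̂)`. -/
lemma tendsto_hatf_left (H : Good r I s) (hf : f ∈ Cs s r) {y₀ : ℝ} (hy0 : 0 < y₀)
    (hylt : (y₀ : EReal) < rhat s r) :
    Filter.Tendsto (hatf r I s f) (nhdsWithin y₀ (Set.Iio y₀))
      (nhds (hatf r I s f y₀)) := by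
  have hneB := Bset_nonempty H hylt
  have hneA := Aset_nonempty H hylt
  obtain ⟨σ, hσdef⟩ : ∃ t, sigm r s y₀ = t := ⟨_, rfl⟩
  have hσmem : σ ∈ Ilt r := hσdef ▸ sigm_mem H hneB
  have hσpos : 0 < σ := hσdef ▸ sigm_pos H hy0 hylt
  have hsm : sminus s I σ ≤ y₀ := hσdef ▸ sminus_sigm_le H hy0.le hneB
  have hsmall : ∀ z ∈ Ilt r, z < σ → s z < y₀ :=
    fun z hz h => s_lt_of_lt_sigm H hz (hσdef ▸ h)
  have hbig : ∀ z ∈ Ilt r, σ < z → y₀ ≤ s z :=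
    fun z hz h => le_s_of_sigm_lt H hneB hz (hσdef ▸ h)
  have hσletau : σ ≤ tau r s y₀ := hσdef ▸ sigm_le_tau H hneA
  rcases eq_or_lt_of_le hsm with hA | hA
  · -- ε/δ case : `sminus σ = y₀`
    have hsσ : y₀ ≤ s σ := hA ▸ sminus_le_s H (Ilt_subset H hσmem)
    have hval : hatf r I s f y₀ = Fm f σ := by
      obtain ⟨x₀, hx₀def⟩ : ∃ t, tau r s y₀ = t := ⟨_, rfl⟩
      have hσle : σ ≤ x₀ := hx₀def ▸ hσletau
      have hx₀pos : 0 < x₀ := lt_of_lt_of_le hσpos hσle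
      have hx₀mem : x₀ ∈ Ilt r := hx₀def ▸ tau_mem H hneA
      have hK1 : sminus s I x₀ ≤ y₀ := hx₀def ▸ sminus_tau_le H hy0.le hneA
      rcases eq_or_lt_of_le hσle with heq | hlt2
      · have hb : y₀ ≤ s x₀ := heq ▸ hsσ
        have hnum : y₀ - sminus s I x₀ = 0 := by rw [← heq, hA]; ring
        rw [hatf_eq1 hx₀def (ne_of_gt hx₀pos) hb, hnum]
        simp only [zero_div, zero_mul, add_zero]
        rw [← heq]
      · have hmid : (σ + x₀) / 2 ∈ Set.Ioo σ x₀ := ⟨by linarith, by linarith⟩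
        have hsconst : ∀ z ∈ Set.Ioo σ x₀, s z = y₀ := fun z hz =>
          le_antisymm (s_le_of_lt_tau H (Ioo_subset_Ilt hσmem.1 hx₀mem hz) (hx₀def ▸ hz.2))
            (hbig z (Ioo_subset_Ilt hσmem.1 hx₀mem hz) hz.1)
        have hsσeq : s σ = y₀ := by
          refine le_antisymm ?_ hsσ
          rw [← hsconst _ hmid]
          exact H.mono (Ilt_subset H hσmem) (Ilt_subset H (Ioo_subset_Ilt hσmem.1 hx₀mem hmid))
            hmid.1.le
        have hnum : y₀ - sminus s I x₀ = 0 := by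
          have h1 : y₀ ≤ sminus s I x₀ := by
            rw [← hsσeq]
            exact s_le_sminus H (Ilt_subset H hx₀mem) (Ilt_subset H hσmem) hlt2
          linarith
        have hb : y₀ ≤ s x₀ := by
          rw [← hsσeq]
          exact H.mono (Ilt_subset H hσmem) (Ilt_subset H hx₀mem) hσle
        rw [hatf_eq1 hx₀def (ne_of_gt hx₀pos) hb, hnum]
        simp only [zero_div, zero_mul, add_zero]
        have hfconst : ∀ z ∈ Set.Ioo σ x₀, f z = f σ := by
          intro z hz
          have hzIlt : z ∈ Ilt r := Ioo_subset_Ilt hσmem.1 hx₀mem hz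
          exact f_eq_of_s_eq hf hzIlt.1 hσmem.1 hzIlt.2 hσmem.2
            (by rw [hsconst z hz, hsσeq])
        rw [Fm_const hlt2 hfconst]
        exact (Fm_eq_self H hf hσmem hσpos (by rw [hA, hsσeq])).symm
    rw [Metric.tendsto_nhdsWithin_nhds]
    intro ε hε
    have hev := abs_eventually_of_tendsto (half_pos hε) (tendsto_Fm hf hσmem hσpos)
    obtain ⟨p, hp, hpsub⟩ := mem_nhdsLT_iff_exists_Ioo_subset.1 hev
    have hp' : p < σ := hp
    set w := (max p 0 + σ) / 2 with hwdef
    have hmax : max p 0 < σ := max_lt hp' hσpos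
    have hw1 : max p 0 < w := by rw [hwdef]; linarith
    have hpw : p < w := lt_of_le_of_lt (le_max_left p 0) hw1
    have hw0 : 0 < w := lt_of_le_of_lt (le_max_right p 0) hw1
    have hwσ : w < σ := by rw [hwdef]; linarith
    have hwIlt : w ∈ Ilt r := mem_Ilt_of_le hσmem hw0.le hwσ.le
    have hsw : s w < y₀ := hsmall w hwIlt hwσ
    refine ⟨y₀ - s w, by linarith, ?_⟩
    intro y' hy'mem hy'dist
    have hy'lt : y' < y₀ := hy'mem
    have hy'gt : s w < y' := by
      rw [Real.dist_eq] at hy'dist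
      have := abs_lt.1 hy'dist
      linarith [this.1, this.2]
    have hy'0 : 0 ≤ y' := le_trans (s_nonneg H (Ilt_subset H hwIlt)) hy'gt.le
    have hy'rhat : (y' : EReal) < rhat s r := lt_trans (EReal.coe_lt_coe_iff.2 hy'lt) hylt
    have hne' := Aset_nonempty H hy'rhat
    obtain ⟨x₁, hx₁def⟩ : ∃ t, tau r s y' = t := ⟨_, rfl⟩
    have hx₁ge : w ≤ x₁ := hx₁def ▸ le_tau H hne' (Ilt_subset H hwIlt) hy'gt
    have hx₁le : x₁ ≤ σ := hx₁def ▸ tau_le ⟨hσmem, lt_of_lt_of_le hy'lt hsσ⟩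
    have hx₁ne : x₁ ≠ σ := by
      intro hcon
      have h2 := hx₁def ▸ sminus_tau_le H hy'0 hne'
      rw [hcon, hA] at h2
      exact absurd h2 (not_le.2 hy'lt)
    have hx₁lt : x₁ < σ := lt_of_le_of_ne hx₁le hx₁ne
    have hx₁mem : x₁ ∈ Ilt r := hx₁def ▸ tau_mem H hne'
    have hx₁pos : 0 < x₁ := lt_of_lt_of_le hw0 hx₁ge
    have hpx₁ : p < x₁ := lt_of_lt_of_le hpw hx₁ge
    have hb2 : |f x₁ - Fm f σ| ≤ ε / 2 := hpsub ⟨hpx₁, hx₁lt⟩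
    have hb1 : |Fm f x₁ - Fm f σ| ≤ ε / 2 := by
      refine Fm_abs_le hf hx₁mem hx₁pos ?_
      filter_upwards [Ioo_mem_nhdsLT hpx₁] with z hz
      exact hpsub ⟨hz.1, lt_trans hz.2 hx₁lt⟩
    have hb3 : |Fp f x₁ - Fm f σ| ≤ ε / 2 := by
      refine Fp_abs_le hf hx₁mem ?_
      filter_upwards [Ioo_mem_nhdsGT hx₁lt] with z hz
      exact hpsub ⟨lt_trans hpx₁ hz.1, hz.2⟩
    have hkey := hatf_abs_le H hf hy'0 hy'rhat (hx₁def ▸ hx₁pos)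
      (hx₁def ▸ hb1) (hx₁def ▸ hb2) (hx₁def ▸ hb3)
    rw [Real.dist_eq, hval]
    exact lt_of_le_of_lt hkey (by linarith)
  · -- affine cases : `sminus σ < y₀`
    by_cases hcase : y₀ ≤ s σ
    · -- branch-1 affine on (sminus σ, y₀]
      refine tendsto_left_of_affine (p := sminus s I σ)
        (α := Fm f σ - (f σ - Fm f σ) / (s σ - sminus s I σ) * sminus s I σ)
        (β := (f σ - Fm f σ) / (s σ - sminus s I σ)) hA ?_ ?_
      · intro y' hy'
        have hy'0 : 0 ≤ y' := le_trans (sminus_nonneg H (Ilt_subset H hσmem)) hy'.1.le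
        have hy'rhat : (y' : EReal) < rhat s r :=
          lt_trans (EReal.coe_lt_coe_iff.2 hy'.2) hylt
        have hne' := Aset_nonempty H hy'rhat
        have htau : tau r s y' = σ := by
          refine le_antisymm (tau_le ⟨hσmem, lt_of_lt_of_le hy'.2 hcase⟩)
            (le_csInf hne' fun z hz => ?_)
          by_contra hzc
          push_neg at hzc
          have := s_le_sminus H (Ilt_subset H hσmem) (Ilt_subset H hz.1) hzc
          exact absurd hz.2 (not_lt.2 (le_trans this hy'.1.le))
        rw [hatf_eq1 htau (ne_of_gt hσpos) (le_trans hy'.2.le hcase)]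
        ring
      · -- value at y₀
        obtain ⟨x₀, hx₀def⟩ : ∃ t, tau r s y₀ = t := ⟨_, rfl⟩
        have hσle : σ ≤ x₀ := hx₀def ▸ hσletau
        have hx₀pos : 0 < x₀ := lt_of_lt_of_le hσpos hσle
        have hx₀mem : x₀ ∈ Ilt r := hx₀def ▸ tau_mem H hneA
        have hK1 : sminus s I x₀ ≤ y₀ := hx₀def ▸ sminus_tau_le H hy0.le hneA
        rcases eq_or_lt_of_le hσle with heq | hlt2
        · rw [hatf_eq1 hx₀def (ne_of_gt hx₀pos) (heq ▸ hcase), ← heq]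
          ring
        · have hsσeq : s σ = y₀ := by
            rcases eq_or_lt_of_le hcase with h | h
            · exact h.symm
            · exfalso
              have := hx₀def ▸ tau_le ⟨hσmem, h⟩
              exact absurd hlt2 (not_lt.2 this)
          have hmid : (σ + x₀) / 2 ∈ Set.Ioo σ x₀ := ⟨by linarith, by linarith⟩
          have hsconst : ∀ z ∈ Set.Ioo σ x₀, s z = y₀ := fun z hz =>
            le_antisymm (s_le_of_lt_tau H (Ioo_subset_Ilt hσmem.1 hx₀mem hz) (hx₀def ▸ hz.2))
              (hbig z (Ioo_subset_Ilt hσmem.1 hx₀mem hz) hz.1)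
          have hnum : y₀ - sminus s I x₀ = 0 := by
            have h1 : y₀ ≤ sminus s I x₀ := by
              rw [← hsσeq]
              exact s_le_sminus H (Ilt_subset H hx₀mem) (Ilt_subset H hσmem) hlt2
            linarith
          have hb : y₀ ≤ s x₀ := by
            rw [← hsσeq]
            exact H.mono (Ilt_subset H hσmem) (Ilt_subset H hx₀mem) hσle
          rw [hatf_eq1 hx₀def (ne_of_gt hx₀pos) hb, hnum]
          simp only [zero_div, zero_mul, add_zero]
          have hfconst : ∀ z ∈ Set.Ioo σ x₀, f z = f σ := by
            intro z hz
            have hzIlt : z ∈ Ilt r := Ioo_subset_Ilt hσmem.1 hx₀mem hz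
            exact f_eq_of_s_eq hf hzIlt.1 hσmem.1 hzIlt.2 hσmem.2
              (by rw [hsconst z hz, hsσeq])
          rw [Fm_const hlt2 hfconst, hsσeq]
          have hd : y₀ - sminus s I σ ≠ 0 := ne_of_gt (by linarith)
          field_simp
          ring
    · -- branch-2 affine on (s σ, y₀]
      push_neg at hcase
      refine tendsto_left_of_affine (p := s σ)
        (α := f σ - (Fp f σ - f σ) / (splus s I σ - s σ) * s σ)
        (β := (Fp f σ - f σ) / (splus s I σ - s σ)) hcase ?_ ?_
      · intro y' hy'
        have hy'0 : 0 ≤ y' := le_trans (s_nonneg H (Ilt_subset H hσmem)) hy'.1.le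
        have hy'rhat : (y' : EReal) < rhat s r :=
          lt_trans (EReal.coe_lt_coe_iff.2 hy'.2) hylt
        have hne' := Aset_nonempty H hy'rhat
        have htau : tau r s y' = σ := by
          refine le_antisymm
            (tau_le_of_forall H hne' hσmem.1 fun z hz hσz =>
              ⟨hz, lt_of_lt_of_le hy'.2 (hbig z hz hσz)⟩)
            (le_csInf hne' fun z hz => ?_)
          by_contra hzc
          push_neg at hzc
          have := H.mono (Ilt_subset H hz.1) (Ilt_subset H hσmem) hzc.le
          exact absurd hz.2 (not_lt.2 (le_trans this hy'.1.le))
        rw [hatf_eq2 htau (ne_of_gt hσpos) (not_le.2 hy'.1)]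
        ring
      · -- value at y₀
        obtain ⟨x₀, hx₀def⟩ : ∃ t, tau r s y₀ = t := ⟨_, rfl⟩
        have hσle : σ ≤ x₀ := hx₀def ▸ hσletau
        have hx₀pos : 0 < x₀ := lt_of_lt_of_le hσpos hσle
        have hx₀mem : x₀ ∈ Ilt r := hx₀def ▸ tau_mem H hneA
        have hK1 : sminus s I x₀ ≤ y₀ := hx₀def ▸ sminus_tau_le H hy0.le hneA
        rcases eq_or_lt_of_le hσle with heq | hlt2
        · rw [hatf_eq2 hx₀def (ne_of_gt hx₀pos) (not_le.2 (heq ▸ hcase)), ← heq]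
          ring
        · have hmid : (σ + x₀) / 2 ∈ Set.Ioo σ x₀ := ⟨by linarith, by linarith⟩
          have hmidIlt : (σ + x₀) / 2 ∈ Ilt r := Ioo_subset_Ilt hσmem.1 hx₀mem hmid
          have hsconst : ∀ z ∈ Set.Ioo σ x₀, s z = y₀ := fun z hz =>
            le_antisymm (s_le_of_lt_tau H (Ioo_subset_Ilt hσmem.1 hx₀mem hz) (hx₀def ▸ hz.2))
              (hbig z (Ioo_subset_Ilt hσmem.1 hx₀mem hz) hz.1)
          have hsplusσ : splus s I σ = y₀ := by
            refine le_antisymm ?_ (hσdef ▸ le_splus_sigm H hylt)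
            rw [← hsconst _ hmid]
            exact splus_le_s H hσmem (Ilt_subset H hmidIlt) hmid.1
          have hnum : y₀ - sminus s I x₀ = 0 := by
            have h1 : y₀ ≤ sminus s I x₀ := by
              rw [← hsconst _ hmid]
              exact s_le_sminus H (Ilt_subset H hx₀mem) (Ilt_subset H hmidIlt) hmid.2
            linarith
          have hb : y₀ ≤ s x₀ := by
            rw [← hsconst _ hmid]
            exact H.mono (Ilt_subset H hmidIlt) (Ilt_subset H hx₀mem) hmid.2.le
          rw [hatf_eq1 hx₀def (ne_of_gt hx₀pos) hb, hnum]
          simp only [zero_div, zero_mul, add_zero]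
          have hfconst : ∀ z ∈ Set.Ioo σ x₀, f z = f ((σ + x₀) / 2) := by
            intro z hz
            have hzIlt : z ∈ Ilt r := Ioo_subset_Ilt hσmem.1 hx₀mem hz
            exact f_eq_of_s_eq hf hzIlt.1 hmidIlt.1 hzIlt.2 hmidIlt.2
              (by rw [hsconst z hz, hsconst _ hmid])
          rw [Fm_const hlt2 hfconst]
          have hFpσ : Fp f σ = f ((σ + x₀) / 2) :=
            Fp_const hmid.1 fun z hz => hfconst z ⟨hz.1, lt_trans hz.2 hmid.2⟩
          rw [← hFpσ, hsplusσ]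
          have hd : y₀ - s σ ≠ 0 := ne_of_gt (by linarith)
          field_simp
          ring

lemma hatf_continuousOn (H : Good r I s) (hf : f ∈ Cs s r) :
    ContinuousOn (hatf r I s f) (Shat s r) := by
  intro y₀ hy₀
  have hR : ContinuousWithinAt (hatf r I s f) (Set.Ici y₀) y₀ := by
    rw [← Set.Ioi_insert, continuousWithinAt_insert_self]
    exact tendsto_hatf_right H hf hy₀.1 hy₀.2
  rcases hy₀.1.eq_or_lt with h0 | h0
  · refine hR.mono fun z hz => ?_
    rw [← h0]
    exact hz.1
  · have hL : ContinuousWithinAt (hatf r I s f) (Set.Iio y₀) y₀ :=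
      tendsto_hatf_left H hf h0 hy₀.2
    refine (hL.union hR).mono fun z _ => ?_
    rcases lt_or_ge z y₀ with h | h
    · exact Or.inl h
    · exact Or.inr h

lemma sImage_eq : sImage s I = (fun t : ℝ => (t : EReal)) '' (s '' I) := by
  rw [Set.image_image]; rfl

lemma notin_closure_of_gap (H : Good r I s) {p : ℝ} (hp : p ∈ Shat s r)
    (hnot : (p : EReal) ∉ Ihat s I r) : p ∉ closure (s '' I) := by
  intro hc
  have hcE : (p : EReal) ∈ closure (sImage s I) := by
    rw [sImage_eq]
    exact image_closure_subset_closure_image continuous_coe_real_ereal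
      (Set.mem_image_of_mem _ hc)
  rw [Ihat] at hnot
  split_ifs at hnot with hsplit
  · exact hnot hcE
  · exact hnot ⟨hcE, fun hmem => absurd (Set.mem_singleton_iff.1 hmem ▸ hp.2) (lt_irrefl _)⟩


lemma gap_nonneg (H : Good r I s) {A B : ℝ}
    (hsub : Set.Ioo A B ⊆ Shat s r \ {xh : ℝ | (xh : EReal) ∈ Ihat s I r})
    (hAB : A < B) : 0 ≤ A := by
  by_contra hc
  push_neg at hc
  set p := (A + min B 0) / 2 with hpdef
  have hAm : A < min B 0 := lt_min hAB hc
  have hp1 : A < p := by rw [hpdef]; linarith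
  have hp2 : p < min B 0 := by rw [hpdef]; linarith
  have hpmem : p ∈ Set.Ioo A B := ⟨hp1, lt_of_lt_of_le hp2 (min_le_left B 0)⟩
  exact absurd ((hsub hpmem).1.1) (not_le.2 (lt_of_lt_of_le hp2 (min_le_right B 0)))

lemma hatf_affine_on_gap (H : Good r I s) (hf : f ∈ Cs s r) {A B : ℝ}
    (hsub : Set.Ioo A B ⊆ Shat s r \ {xh : ℝ | (xh : EReal) ∈ Ihat s I r})
    (hAB : A < B) : ∃ α β : ℝ, ∀ p ∈ Set.Ioo A B, hatf r I s f p = α + β * p := by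
  have hA0 : 0 ≤ A := gap_nonneg H hsub hAB
  have hnc : ∀ p ∈ Set.Ioo A B, p ∉ closure (s '' I) := fun p hp =>
    notin_closure_of_gap H (hsub hp).1 (hsub hp).2
  have hsval : ∀ z ∈ I, s z ∉ Set.Ioo A B := fun z hz hmem =>
    hnc _ hmem (subset_closure (Set.mem_image_of_mem s hz))
  set m := (A + B) / 2 with hmdef
  have hm : m ∈ Set.Ioo A B := ⟨by rw [hmdef]; linarith, by rw [hmdef]; linarith⟩
  -- τ is constant on the gap
  have hAeq : ∀ p ∈ Set.Ioo A B, Aset r s p = Aset r s m := by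
    intro p hp
    ext z
    constructor
    · rintro ⟨hz1, hz2⟩
      refine ⟨hz1, ?_⟩
      have : s z ∉ Set.Ioo A B := hsval z (Ilt_subset H hz1)
      rcases lt_or_ge m (s z) with h | h
      · exact h
      · exfalso
        exact this ⟨lt_trans hp.1 hz2, lt_of_le_of_lt h hm.2⟩
    · rintro ⟨hz1, hz2⟩
      refine ⟨hz1, ?_⟩
      have : s z ∉ Set.Ioo A B := hsval z (Ilt_subset H hz1)
      rcases lt_or_ge p (s z) with h | h
      · exact h
      · exfalso
        exact this ⟨lt_trans hm.1 hz2, lt_of_le_of_lt h hp.2⟩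
  have htaueq : ∀ p ∈ Set.Ioo A B, tau r s p = tau r s m := by
    intro p hp
    rw [tau, tau, hAeq p hp]
  obtain ⟨x₀, hx₀def⟩ : ∃ t, tau r s m = t := ⟨_, rfl⟩
  have hm0 : 0 < m := lt_of_le_of_lt hA0 hm.1
  have hx₀pos : 0 < x₀ := hx₀def ▸ tau_pos H hm0 (hsub hm).1.2
  have hx₀mem : x₀ ∈ Ilt r := hx₀def ▸ tau_mem H (Aset_nonempty H (hsub hm).1.2)
  have hsx₀ : s x₀ ∉ Set.Ioo A B := hsval x₀ (Ilt_subset H hx₀mem)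
  rcases le_or_gt (s x₀) A with hside | hside
  · -- branch 2 everywhere on the gap
    refine ⟨f x₀ - (Fp f x₀ - f x₀) / (splus s I x₀ - s x₀) * s x₀,
      (Fp f x₀ - f x₀) / (splus s I x₀ - s x₀), fun p hp => ?_⟩
    rw [hatf_eq2 ((htaueq p hp).trans hx₀def) (ne_of_gt hx₀pos)
      (not_le.2 (lt_of_le_of_lt hside hp.1))]
    ring
  · have hside' : B ≤ s x₀ := by
      rcases le_or_gt B (s x₀) with h | h
      · exact h
      · exact absurd ⟨hside, h⟩ hsx₀
    refine ⟨Fm f x₀ - (f x₀ - Fm f x₀) / (s x₀ - sminus s I x₀) * sminus s I x₀,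
      (f x₀ - Fm f x₀) / (s x₀ - sminus s I x₀), fun p hp => ?_⟩
    rw [hatf_eq1 ((htaueq p hp).trans hx₀def) (ne_of_gt hx₀pos)
      (le_of_lt (lt_of_lt_of_le hp.2 hside'))]
    ring

lemma hatf_mem_Chat (H : Good r I s) (hf : f ∈ Cs s r) : hatf r I s f ∈ Chat s I r := by
  refine ⟨hatf_continuousOn H hf, fun A B hsub x hx y hy t ht => ?_⟩
  rcases le_or_gt B A with h | h
  · rw [Set.Ioo_eq_empty (not_lt.2 h)] at hx
    exact absurd hx (Set.notMem_empty x)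
  obtain ⟨α, β, hαβ⟩ := hatf_affine_on_gap H hf hsub h
  have hq : t * x + (1 - t) * y ∈ Set.Ioo A B := by
    rcases ht.1.eq_or_lt with h0 | h0
    · rw [← h0]
      simpa using hy
    · constructor
      · nlinarith [mul_pos h0 (sub_pos.2 hx.1),
          mul_nonneg (by linarith [ht.2] : (0:ℝ) ≤ 1 - t) (by linarith [hy.1] : (0:ℝ) ≤ y - A)]
      · nlinarith [mul_pos h0 (sub_pos.2 hx.2),
          mul_nonneg (by linarith [ht.2] : (0:ℝ) ≤ 1 - t) (by linarith [hy.2] : (0:ℝ) ≤ B - y)]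
  rw [hαβ _ hq, hαβ _ hx, hαβ _ hy]
  ring

lemma chat_affine_formula {fh : ℝ → ℝ} (hfh : fh ∈ Chat s I r) {A B : ℝ} (hAB : A < B)
    (hsub : Set.Ioo A B ⊆ Shat s r \ {xh : ℝ | (xh : EReal) ∈ Ihat s I r})
    (hA : A ∈ Shat s r) (hB : B ∈ Shat s r) :
    ∀ p ∈ Set.Ioo A B, fh p = fh A + ((p - A) / (B - A)) * (fh B - fh A) := by
  set p₁ := (2 * A + B) / 3 with hp₁def
  set p₂ := (A + 2 * B) / 3 with hp₂def
  have hp₁ : p₁ ∈ Set.Ioo A B := ⟨by rw [hp₁def]; linarith, by rw [hp₁def]; linarith⟩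
  have hp₂ : p₂ ∈ Set.Ioo A B := ⟨by rw [hp₂def]; linarith, by rw [hp₂def]; linarith⟩
  have hp₁₂ : p₁ < p₂ := by rw [hp₁def, hp₂def]; linarith
  have hd : p₂ - p₁ ≠ 0 := ne_of_gt (by linarith)
  have aff := hfh.2 A B hsub
  have key : ∀ p ∈ Set.Ioo A B, fh p = fh p₁ + ((p - p₁) / (p₂ - p₁)) * (fh p₂ - fh p₁) := by
    intro p hp
    rcases le_total p p₂ with h2 | h2
    · rcases le_total p₁ p with h1 | h1
      · -- p ∈ [p₁, p₂]
        set t := (p₂ - p) / (p₂ - p₁) with htdef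
        have ht : t ∈ Set.Icc (0:ℝ) 1 :=
          ⟨div_nonneg (by linarith) (by linarith),
            (div_le_one (by linarith)).2 (by linarith)⟩
        have hrep : t * p₁ + (1 - t) * p₂ = p := by
          rw [htdef]; field_simp; ring
        have h3 := aff p₁ hp₁ p₂ hp₂ t ht
        rw [hrep] at h3
        rw [h3, htdef]
        field_simp
        ring
      · -- p ≤ p₁
        set t := (p₂ - p₁) / (p₂ - p) with htdef
        have hdp : p₂ - p ≠ 0 := ne_of_gt (by linarith)
        have ht : t ∈ Set.Icc (0:ℝ) 1 :=
          ⟨div_nonneg (by linarith) (by linarith),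
            (div_le_one (by linarith)).2 (by linarith)⟩
        have hrep : t * p + (1 - t) * p₂ = p₁ := by
          rw [htdef]; field_simp; ring
        have h3 := aff p hp p₂ hp₂ t ht
        rw [hrep] at h3
        have ht0 : t ≠ 0 := div_ne_zero hd hdp
        have hfp : fh p = (fh p₁ - (1 - t) * fh p₂) / t := by
          rw [eq_div_iff ht0]
          linarith [h3]
        rw [hfp, htdef]
        field_simp
        ring
    · -- p₂ ≤ p
      set t := (p - p₂) / (p - p₁) with htdef
      have hdp : p - p₁ ≠ 0 := ne_of_gt (by linarith)
      have ht : t ∈ Set.Icc (0:ℝ) 1 :=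
        ⟨div_nonneg (by linarith) (by linarith),
          (div_le_one (by linarith)).2 (by linarith)⟩
      have hrep : t * p₁ + (1 - t) * p = p₂ := by
        rw [htdef]; field_simp; ring
      have h3 := aff p₁ hp₁ p hp t ht
      rw [hrep] at h3
      have ht1 : (1 : ℝ) - t ≠ 0 := by
        rw [htdef]
        have : (p - p₂) / (p - p₁) < 1 := (div_lt_one (by linarith)).2 (by linarith)
        linarith
      have hfp : fh p = (fh p₂ - t * fh p₁) / (1 - t) := by
        rw [eq_div_iff ht1]
        linarith [h3]
      rw [hfp, htdef]
      field_simp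
      rw [show p - p₁ - (p - p₂) = p₂ - p₁ by ring, mul_div_assoc, div_self hd]
      ring
  have hsubShat : Set.Ioo A B ⊆ Shat s r := fun p hp => (hsub hp).1
  have hcont : Continuous (fun p : ℝ => fh p₁ + ((p - p₁) / (p₂ - p₁)) * (fh p₂ - fh p₁)) :=
    continuous_const.add (((continuous_id.sub continuous_const).div_const _).mul
      continuous_const)
  have hAeq : fh A = fh p₁ + ((A - p₁) / (p₂ - p₁)) * (fh p₂ - fh p₁) := by
    have h1 : Filter.Tendsto fh (nhdsWithin A (Set.Ioo A B)) (nhds (fh A)) :=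
      (hfh.1 A hA).mono hsubShat
    have h2 : Filter.Tendsto fh (nhdsWithin A (Set.Ioo A B))
        (nhds (fh p₁ + ((A - p₁) / (p₂ - p₁)) * (fh p₂ - fh p₁))) := by
      refine Filter.Tendsto.congr' ?_ ((hcont.tendsto A).mono_left nhdsWithin_le_nhds)
      filter_upwards [self_mem_nhdsWithin] with p hp
      exact (key p hp).symm
    rw [nhdsWithin_Ioo_eq_nhdsGT hAB] at h1 h2
    exact tendsto_nhds_unique h1 h2
  have hBeq : fh B = fh p₁ + ((B - p₁) / (p₂ - p₁)) * (fh p₂ - fh p₁) := by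
    have h1 : Filter.Tendsto fh (nhdsWithin B (Set.Ioo A B)) (nhds (fh B)) :=
      (hfh.1 B hB).mono hsubShat
    have h2 : Filter.Tendsto fh (nhdsWithin B (Set.Ioo A B))
        (nhds (fh p₁ + ((B - p₁) / (p₂ - p₁)) * (fh p₂ - fh p₁))) := by
      refine Filter.Tendsto.congr' ?_ ((hcont.tendsto B).mono_left nhdsWithin_le_nhds)
      filter_upwards [self_mem_nhdsWithin] with p hp
      exact (key p hp).symm
    rw [nhdsWithin_Ioo_eq_nhdsLT hAB] at h1 h2
    exact tendsto_nhds_unique h1 h2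
  intro p hp
  rw [key p hp, hAeq, hBeq, hp₁def, hp₂def]
  have hBA : B - A ≠ 0 := ne_of_gt (by linarith)
  field_simp
  ring

/-- Uniqueness: two members of `Chat` agreeing on `s(Ilt r)` agree on `Shat`. -/
lemma chat_unique (H : Good r I s) {fh₁ fh₂ : ℝ → ℝ} (h1 : fh₁ ∈ Chat s I r)
    (h2 : fh₂ ∈ Chat s I r) (heq : ∀ x ∈ Ilt r, fh₁ (s x) = fh₂ (s x)) :
    Set.EqOn fh₁ fh₂ (Shat s r) := by
  set S : Set ℝ := s '' Ilt r with hSdef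
  have hSsub : S ⊆ Shat s r := by rintro _ ⟨x, hx, rfl⟩; exact s_mem_Shat H hx
  have hSeq : ∀ y ∈ S, fh₁ y = fh₂ y := by rintro _ ⟨x, hx, rfl⟩; exact heq x hx
  have hK : ∀ y ∈ Shat s r, y ∈ closure S → fh₁ y = fh₂ y := by
    intro y hy hyc
    obtain ⟨u, hu, hulim⟩ := mem_closure_iff_seq_limit.1 hyc
    have hu' : Filter.Tendsto u Filter.atTop (nhdsWithin y (Shat s r)) :=
      tendsto_nhdsWithin_iff.2 ⟨hulim, Filter.Eventually.of_forall fun n => hSsub (hu n)⟩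
    have t1 : Filter.Tendsto (fh₁ ∘ u) Filter.atTop (nhds (fh₁ y)) :=
      (h1.1 y hy).tendsto.comp hu'
    have t2 : Filter.Tendsto (fh₁ ∘ u) Filter.atTop (nhds (fh₂ y)) := by
      refine ((h2.1 y hy).tendsto.comp hu').congr fun n => ?_
      exact (hSeq (u n) (hu n)).symm
    exact tendsto_nhds_unique t1 t2
  intro y hy
  by_cases hyc : y ∈ closure S
  · exact hK y hy hyc
  · have h0S : (0:ℝ) ∈ S := ⟨0, zero_mem_Ilt H, H.hs0⟩
    have hy0 : 0 ≤ y := hy.1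
    set K := closure S with hKdef
    have hKclosed : IsClosed K := isClosed_closure
    have hKpos : K ⊆ Set.Ici 0 :=
      closure_minimal (by rintro _ ⟨x, hx, rfl⟩; exact s_nonneg H (Ilt_subset H hx))
        isClosed_Ici
    have hcpt1 : IsCompact (K ∩ Set.Icc 0 y) := isCompact_Icc.inter_left hKclosed
    have hne1 : (K ∩ Set.Icc 0 y).Nonempty := ⟨0, subset_closure h0S, le_refl 0, hy0⟩
    set A := sSup (K ∩ Set.Icc 0 y) with hAdef
    have hAmem := hcpt1.sSup_mem hne1
    have hAy : A ≠ y := fun hcon => hyc (by rw [← hcon]; exact hAmem.1)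
    have hAlt : A < y := lt_of_le_of_ne hAmem.2.2 hAy
    obtain ⟨xv, hxv, hxvgt⟩ := Aset_nonempty H hy.2
    set M := s xv with hMdef
    have hMS : M ∈ S := ⟨xv, hxv, rfl⟩
    have hcpt2 : IsCompact (K ∩ Set.Icc y M) := isCompact_Icc.inter_left hKclosed
    have hne2 : (K ∩ Set.Icc y M).Nonempty := ⟨M, subset_closure hMS, hxvgt.le, le_refl M⟩
    set B := sInf (K ∩ Set.Icc y M) with hBdef
    have hBmem := hcpt2.sInf_mem hne2
    have hBy : B ≠ y := fun hcon => hyc (by rw [← hcon]; exact hBmem.1)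
    have hBgt : y < B := lt_of_le_of_ne hBmem.2.1 (Ne.symm hBy)
    have hAB : A < B := lt_trans hAlt hBgt
    have hA_Shat : A ∈ Shat s r := ⟨hAmem.2.1, lt_trans (EReal.coe_lt_coe_iff.2 hAlt) hy.2⟩
    have hB_Shat : B ∈ Shat s r := ⟨le_trans hy0 hBmem.2.1,
      lt_of_le_of_lt (EReal.coe_le_coe_iff.2 hBmem.2.2) (H.hslt xv hxv)⟩
    have hgap : ∀ k ∈ K, k ∉ Set.Ioo A B := by
      intro k hk hkmem
      have hk0 : (0:ℝ) ≤ k := hKpos hk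
      rcases le_or_gt k y with h | h
      · exact absurd (le_csSup hcpt1.bddAbove ⟨hk, hk0, h⟩) (not_le.2 hkmem.1)
      · have hkM : k ≤ M := le_of_lt (lt_of_lt_of_le hkmem.2 hBmem.2.2)
        exact absurd (csInf_le hcpt2.bddBelow ⟨hk, h.le, hkM⟩) (not_le.2 hkmem.2)
    have hsub : Set.Ioo A B ⊆ Shat s r \ {xh : ℝ | (xh : EReal) ∈ Ihat s I r} := by
      intro p hp
      have hp_Shat : p ∈ Shat s r := ⟨le_trans hAmem.2.1 hp.1.le,
        lt_trans (EReal.coe_lt_coe_iff.2 hp.2) hB_Shat.2⟩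
      refine ⟨hp_Shat, fun hpIhat => ?_⟩
      have hpcE : (p : EReal) ∈ closure (sImage s I) := by
        rw [Ihat] at hpIhat
        split_ifs at hpIhat with hsplit
        · exact hpIhat
        · exact hpIhat.1
      have hpc : p ∈ closure (s '' I) := by
        rw [EReal.isEmbedding_coe.closure_eq_preimage_closure_image (s '' I)]
        refine Set.mem_preimage.2 ?_
        rw [← sImage_eq]
        exact hpcE
      rcases H.hI with hIlt | ⟨rr, hrr, hIcc⟩
      · rw [hIlt] at hpc
        exact hgap p hpc hp
      · have hsub2 : s '' I ⊆ S ∪ {s rr} := by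
          rintro _ ⟨z, hz, rfl⟩
          rw [hIcc] at hz
          rcases eq_or_lt_of_le hz.2 with h | h
          · right; rw [h]; rfl
          · left
            exact ⟨z, ⟨hz.1, by rw [hrr]; exact_mod_cast h⟩, rfl⟩
        have hcl : closure (s '' I) ⊆ K ∪ {s rr} :=
          closure_minimal (hsub2.trans (Set.union_subset_union subset_closure
            (le_refl _))) (hKclosed.union isClosed_singleton)
        rcases hcl hpc with h | h
        · exact hgap p h hp
        · have hrrI : rr ∈ I := by
            rw [hIcc]
            refine ⟨?_, le_refl rr⟩
            have := H.hr
            rw [hrr] at this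
            exact_mod_cast le_of_lt this
          have hrhat := H.hsr rr hrr hrrI
          have hplt : (p : EReal) < rhat s r :=
            lt_trans (EReal.coe_lt_coe_iff.2 hp.2) hB_Shat.2
          rw [Set.mem_singleton_iff] at h
          rw [h, hrhat] at hplt
          exact lt_irrefl _ hplt
    have hAK : fh₁ A = fh₂ A := hK A hA_Shat hAmem.1
    have hBK : fh₁ B = fh₂ B := hK B hB_Shat hBmem.1
    have e1 := chat_affine_formula h1 hAB hsub hA_Shat hB_Shat y ⟨hAlt, hBgt⟩
    have e2 := chat_affine_formula h2 hAB hsub hA_Shat hB_Shat y ⟨hAlt, hBgt⟩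
    rw [e1, e2, hAK, hBK]

lemma sminus_mem_Shat (H : Good r I s) {x : ℝ} (hx : x ∈ Ilt r) :
    sminus s I x ∈ Shat s r :=
  ⟨sminus_nonneg H (Ilt_subset H hx),
    lt_of_le_of_lt (EReal.coe_le_coe_iff.2 (sminus_le_s H (Ilt_subset H hx))) (H.hslt x hx)⟩

lemma splus_mem_Shat (H : Good r I s) {x : ℝ} (hx : x ∈ Ilt r) :
    splus s I x ∈ Shat s r :=
  ⟨le_trans (s_nonneg H (Ilt_subset H hx)) (s_le_splus H hx), splus_lt_rhat H hx⟩

lemma comp_tendsto_sminus (H : Good r I s) {fh : ℝ → ℝ}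
    (hfh : ContinuousOn fh (Shat s r)) {x : ℝ} (hx : x ∈ Ilt r) (hx0 : 0 < x) :
    Filter.Tendsto (fun z => fh (s z)) (nhdsWithin x (Set.Iio x))
      (nhds (fh (sminus s I x))) := by
  have hmem := sminus_mem_Shat H hx
  have hts : Filter.Tendsto s (nhdsWithin x (Set.Iio x))
      (nhdsWithin (sminus s I x) (Shat s r)) := by
    refine tendsto_nhdsWithin_iff.2 ⟨tendsto_sminus H hx hx0, ?_⟩
    filter_upwards [Ioo_mem_nhdsLT hx0] with z hz
    exact s_mem_Shat H (Ioo_subset_Ilt (le_refl 0) hx hz)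
  exact (hfh _ hmem).tendsto.comp hts

lemma comp_tendsto_splus (H : Good r I s) {fh : ℝ → ℝ}
    (hfh : ContinuousOn fh (Shat s r)) {x : ℝ} (hx : x ∈ Ilt r) :
    Filter.Tendsto (fun z => fh (s z)) (nhdsWithin x (Set.Ioi x))
      (nhds (fh (splus s I x))) := by
  have hmem := splus_mem_Shat H hx
  obtain ⟨w, hw, hxw⟩ := exists_gt_Ilt H hx
  have hts : Filter.Tendsto s (nhdsWithin x (Set.Ioi x))
      (nhdsWithin (splus s I x) (Shat s r)) := by
    refine tendsto_nhdsWithin_iff.2 ⟨tendsto_splus H hx, ?_⟩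
    filter_upwards [Ioo_mem_nhdsGT hxw] with z hz
    exact s_mem_Shat H (Ioo_subset_Ilt hx.1 hw hz)
  exact (hfh _ hmem).tendsto.comp hts

lemma comp_mem_Cs (H : Good r I s) {fh : ℝ → ℝ} (hfh : fh ∈ Chat s I r) :
    (fun x : ℝ => fh (s x)) ∈ Cs s r := by
  have hcont := hfh.1
  refine ⟨?_, ?_, ?_, ?_⟩
  · -- right continuity at 0
    have hmem : s 0 ∈ Shat s r := s_mem_Shat H (zero_mem_Ilt H)
    obtain ⟨w, hw, h0w⟩ := exists_gt_Ilt H (zero_mem_Ilt H)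
    have hts : Filter.Tendsto s (nhdsWithin 0 (Set.Ioi 0))
        (nhdsWithin (s 0) (Shat s r)) := by
      refine tendsto_nhdsWithin_iff.2 ⟨by rw [H.hs0]; exact H.hs0', ?_⟩
      filter_upwards [Ioo_mem_nhdsGT h0w] with z hz
      exact s_mem_Shat H (Ioo_subset_Ilt (le_refl 0) hw hz)
    exact (hcont _ hmem).tendsto.comp hts
  · intro x hx0 hxr
    exact ⟨⟨fh (sminus s I x), comp_tendsto_sminus H hcont ⟨hx0.le, hxr⟩ hx0⟩,
      ⟨fh (splus s I x), comp_tendsto_splus H hcont ⟨hx0.le, hxr⟩⟩⟩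
  · intro x hx0 hxr
    have hx : x ∈ Ilt r := ⟨hx0.le, hxr⟩
    have hmem : s x ∈ Shat s r := s_mem_Shat H hx
    constructor
    · intro hsr'
      obtain ⟨w, hw, hxw⟩ := exists_gt_Ilt H hx
      have hts : Filter.Tendsto s (nhdsWithin x (Set.Ioi x))
          (nhdsWithin (s x) (Shat s r)) := by
        refine tendsto_nhdsWithin_iff.2 ⟨hsr', ?_⟩
        filter_upwards [Ioo_mem_nhdsGT hxw] with z hz
        exact s_mem_Shat H (Ioo_subset_Ilt hx.1 hw hz)
      exact (hcont _ hmem).tendsto.comp hts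
    · intro hsl'
      have hts : Filter.Tendsto s (nhdsWithin x (Set.Iio x))
          (nhdsWithin (s x) (Shat s r)) := by
        refine tendsto_nhdsWithin_iff.2 ⟨hsl', ?_⟩
        filter_upwards [Ioo_mem_nhdsLT hx0] with z hz
        exact s_mem_Shat H (Ioo_subset_Ilt (le_refl 0) hx hz)
      exact (hcont _ hmem).tendsto.comp hts
  · intro x y _ _ _ hxy
    simp only []
    rw [hxy]

lemma comp_matchrel (H : Good r I s) {fh : ℝ → ℝ} (hfh : fh ∈ Chat s I r) :
    MatchRel s I r (fun x : ℝ => fh (s x)) fh := by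
  refine ⟨fun x _ => rfl, ?_, ?_⟩
  · intro x hx0 hxr L hL
    exact tendsto_nhds_unique (comp_tendsto_sminus H hfh.1 ⟨hx0.le, hxr⟩ hx0) hL
  · intro x hx0 hxr _ L hL
    exact tendsto_nhds_unique (comp_tendsto_splus H hfh.1 ⟨hx0.le, hxr⟩) hL

/-! ### linearity -/

lemma lin_Cs {g : ℝ → ℝ} (hf : f ∈ Cs s r) (hg : g ∈ Cs s r) (c : ℝ) :
    (fun x : ℝ => c * f x + g x) ∈ Cs s r := by
  refine ⟨(hf.1.const_mul c).add hg.1, ?_, ?_, ?_⟩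
  · intro x hx0 hxr
    obtain ⟨⟨L1, h1⟩, ⟨L1', h1'⟩⟩ := hf.2.1 x hx0 hxr
    obtain ⟨⟨L2, h2⟩, ⟨L2', h2'⟩⟩ := hg.2.1 x hx0 hxr
    exact ⟨⟨c * L1 + L2, (h1.const_mul c).add h2⟩, ⟨c * L1' + L2', (h1'.const_mul c).add h2'⟩⟩
  · intro x hx0 hxr
    constructor
    · intro hs'
      exact (((hf.2.2.1 x hx0 hxr).1 hs').const_mul c).add ((hg.2.2.1 x hx0 hxr).1 hs')
    · intro hs'
      exact (((hf.2.2.1 x hx0 hxr).2 hs').const_mul c).add ((hg.2.2.1 x hx0 hxr).2 hs')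
  · intro x y hx0 hxy hyr hsxy
    simp only []
    rw [hf.2.2.2 x y hx0 hxy hyr hsxy, hg.2.2.2 x y hx0 hxy hyr hsxy]

lemma lin_Chat {fh gh : ℝ → ℝ} (h1 : fh ∈ Chat s I r) (h2 : gh ∈ Chat s I r) (c : ℝ) :
    (fun xh : ℝ => c * fh xh + gh xh) ∈ Chat s I r := by
  refine ⟨(continuousOn_const.mul h1.1).add h2.1, ?_⟩
  intro A B hsub x hx y hy t ht
  simp only []
  rw [h1.2 A B hsub x hx y hy t ht, h2.2 A B hsub x hx y hy t ht]
  ring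

lemma lin_matchrel {g fh gh : ℝ → ℝ} (hf : f ∈ Cs s r) (hg : g ∈ Cs s r)
    (m1 : MatchRel s I r f fh) (m2 : MatchRel s I r g gh) (c : ℝ) :
    MatchRel s I r (fun x : ℝ => c * f x + g x) (fun xh : ℝ => c * fh xh + gh xh) := by
  refine ⟨?_, ?_, ?_⟩
  · intro x hx
    simp only []
    rw [m1.1 x hx, m2.1 x hx]
  · intro x hx0 hxr L hL
    obtain ⟨L1, h1⟩ := (hf.2.1 x hx0 hxr).1
    obtain ⟨L2, h2⟩ := (hg.2.1 x hx0 hxr).1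
    have hLeq : L = c * L1 + L2 := tendsto_nhds_unique hL ((h1.const_mul c).add h2)
    simp only []
    rw [m1.2.1 x hx0 hxr L1 h1, m2.2.1 x hx0 hxr L2 h2, hLeq]
  · intro x hx0 hxr hsp L hL
    obtain ⟨L1, h1⟩ := (hf.2.1 x hx0 hxr).2
    obtain ⟨L2, h2⟩ := (hg.2.1 x hx0 hxr).2
    have hLeq : L = c * L1 + L2 := tendsto_nhds_unique hL ((h1.const_mul c).add h2)
    simp only []
    rw [m1.2.2 x hx0 hxr hsp L1 h1, m2.2.2 x hx0 hxr hsp L2 h2, hLeq]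

/-! ### behaviour at the right endpoint -/

lemma star_forward (H : Good r I s) (hf : f ∈ Cs s r) {L : ℝ}
    (hL : Filter.Tendsto f (Filter.comap (fun x : ℝ => (x : EReal))
      (nhdsWithin r (Set.Iio r))) (nhds L)) :
    Filter.Tendsto (hatf r I s f) (Filter.comap (fun xh : ℝ => (xh : EReal))
      (nhdsWithin (rhat s r) (Set.Iio (rhat s r)))) (nhds L) := by
  rw [Metric.tendsto_nhds]
  intro ε hε
  have hbase : ∀ᶠ x in Filter.comap (fun x : ℝ => (x : EReal)) (nhdsWithin r (Set.Iio r)),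
      |f x - L| ≤ ε / 2 := abs_eventually_of_tendsto (half_pos hε) hL
  obtain ⟨V, hV, hVsub⟩ := Filter.mem_comap.1 hbase
  have hbot : (⊥ : EReal) < r := by
    refine lt_trans (EReal.bot_lt_coe 0) ?_
    exact_mod_cast H.hr
  obtain ⟨M, hM, hMsub⟩ := (mem_nhdsLT_iff_exists_Ioo_subset' hbot).1 hV
  have hMr : M ⊔ 0 < r := sup_lt_iff.2 ⟨hM, H.hr⟩
  obtain ⟨w₀, hw₀1, hw₀2⟩ := EReal.exists_between_coe_real hMr
  have hw₀pos : (0:ℝ) < w₀ := by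
    have : ((0:ℝ) : EReal) < (w₀ : EReal) := lt_of_le_of_lt le_sup_right hw₀1
    exact_mod_cast this
  have hw₀Ilt : w₀ ∈ Ilt r := ⟨hw₀pos.le, hw₀2⟩
  have hctrl : ∀ z ∈ Ilt r, w₀ < z → |f z - L| ≤ ε / 2 := by
    intro z hz hwz
    refine hVsub (Set.mem_preimage.2 (hMsub ⟨?_, hz.2⟩))
    exact lt_trans (lt_of_le_of_lt le_sup_left hw₀1) (EReal.coe_lt_coe_iff.2 hwz)
  obtain ⟨w, hw, hw₀w⟩ := exists_gt_Ilt H hw₀Ilt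
  have hmem2 : Set.Ioo ((s w : ℝ) : EReal) (rhat s r) ∈ nhdsWithin (rhat s r)
      (Set.Iio (rhat s r)) := Ioo_mem_nhdsLT (H.hslt w hw)
  filter_upwards [Filter.preimage_mem_comap hmem2] with y hy
  have hy1 : s w < y := EReal.coe_lt_coe_iff.1 hy.1
  have hy2 : (y : EReal) < rhat s r := hy.2
  have hy0 : 0 ≤ y := le_trans (s_nonneg H (Ilt_subset H hw)) hy1.le
  have hne' := Aset_nonempty H hy2
  obtain ⟨x₁, hx₁def⟩ : ∃ t, tau r s y = t := ⟨_, rfl⟩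
  have hx₁ge : w ≤ x₁ := hx₁def ▸ le_tau H hne' (Ilt_subset H hw) hy1
  have hx₁mem : x₁ ∈ Ilt r := hx₁def ▸ tau_mem H hne'
  have hx₁gt : w₀ < x₁ := lt_of_lt_of_le hw₀w hx₁ge
  have hx₁pos : 0 < x₁ := lt_trans hw₀pos hx₁gt
  have hb2 : |f x₁ - L| ≤ ε / 2 := hctrl x₁ hx₁mem hx₁gt
  have hb1 : |Fm f x₁ - L| ≤ ε / 2 := by
    refine Fm_abs_le hf hx₁mem hx₁pos ?_
    filter_upwards [Ioo_mem_nhdsLT hx₁gt] with z hz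
    exact hctrl z (mem_Ilt_of_le hx₁mem (le_trans hw₀pos.le hz.1.le) hz.2.le) hz.1
  have hb3 : |Fp f x₁ - L| ≤ ε / 2 := by
    obtain ⟨w₂, hw₂, hx₁w₂⟩ := exists_gt_Ilt H hx₁mem
    refine Fp_abs_le hf hx₁mem ?_
    filter_upwards [Ioo_mem_nhdsGT hx₁w₂] with z hz
    exact hctrl z (mem_Ilt_of_le hw₂ (le_trans hx₁pos.le hz.1.le) hz.2.le)
      (lt_trans hx₁gt hz.1)
  have hkey := hatf_abs_le H hf hy0 hy2 (hx₁def ▸ hx₁pos)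
    (hx₁def ▸ hb1) (hx₁def ▸ hb2) (hx₁def ▸ hb3)
  rw [Real.dist_eq]
  exact lt_of_le_of_lt hkey (by linarith)

lemma star_backward (H : Good r I s) {fh g : ℝ → ℝ} {L : ℝ}
    (hL : Filter.Tendsto fh (Filter.comap (fun xh : ℝ => (xh : EReal))
      (nhdsWithin (rhat s r) (Set.Iio (rhat s r)))) (nhds L))
    (hm1 : ∀ x ∈ Ilt r, fh (s x) = g x) :
    Filter.Tendsto g (Filter.comap (fun x : ℝ => (x : EReal))
      (nhdsWithin r (Set.Iio r))) (nhds L) := by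
  have hevIlt : ∀ᶠ x in Filter.comap (fun x : ℝ => (x : EReal))
      (nhdsWithin r (Set.Iio r)), x ∈ Ilt r := by
    filter_upwards [Filter.preimage_mem_comap (Ioo_mem_nhdsLT H.hr)] with x hx
    simp only [Set.mem_preimage, Set.mem_Ioo] at hx
    have hx0 : ((0:ℝ) : EReal) < (x : EReal) := by exact_mod_cast hx.1
    exact ⟨(EReal.coe_lt_coe_iff.1 hx0).le, hx.2⟩
  have hst : Filter.Tendsto (fun x : ℝ => ((s x : ℝ) : EReal))
      (Filter.comap (fun x : ℝ => (x : EReal)) (nhdsWithin r (Set.Iio r)))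
      (nhdsWithin (rhat s r) (Set.Iio (rhat s r))) := by
    rw [tendsto_nhdsWithin_iff]
    constructor
    · refine tendsto_order.2 ⟨fun a ha => ?_, fun a ha => ?_⟩
      · obtain ⟨b, ⟨xw, hxw, rfl⟩, hab⟩ := lt_sSup_iff.1 ha
        filter_upwards [Filter.preimage_mem_comap
          (Ioo_mem_nhdsLT hxw.2), hevIlt] with x hx hxIlt
        simp only [Set.mem_preimage, Set.mem_Ioo] at hx
        have hxwx : xw < x := EReal.coe_lt_coe_iff.1 hx.1
        exact lt_of_lt_of_le hab (EReal.coe_le_coe_iff.2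
          (H.mono (Ilt_subset H hxw) (Ilt_subset H hxIlt) hxwx.le))
      · filter_upwards [hevIlt] with x hx
        exact lt_trans (H.hslt x hx) ha
    · filter_upwards [hevIlt] with x hx
      exact H.hslt x hx
  have hcomp : Filter.Tendsto s (Filter.comap (fun x : ℝ => (x : EReal))
      (nhdsWithin r (Set.Iio r)))
      (Filter.comap (fun xh : ℝ => (xh : EReal))
        (nhdsWithin (rhat s r) (Set.Iio (rhat s r)))) :=
    Filter.tendsto_comap_iff.2 hst
  refine Filter.Tendsto.congr' ?_ (hL.comp hcomp)
  filter_upwards [hevIlt] with x hx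
  exact hm1 x hx

end S9

theorem stmt9 (r : EReal) (hr : 0 < r) (I : Set ℝ)
    (hI : I = Ilt r ∨ ∃ rr : ℝ, r = (rr : EReal) ∧ I = Set.Icc 0 rr)
    (s : ℝ → ℝ) (hmono : MonotoneOn s I) (hs0 : s 0 = 0)
    (hs0' : Filter.Tendsto s (nhdsWithin 0 (Set.Ioi 0)) (nhds 0))
    (hspos : ∀ x ∈ I, 0 < x → 0 < s x)
    (hslt : ∀ x ∈ Ilt r, ((s x : ℝ) : EReal) < rhat s r)
    (hsr : ∀ rr : ℝ, r = (rr : EReal) → rr ∈ I → ((s rr : ℝ) : EReal) = rhat s r) :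
    -- existence and uniqueness of `f̂ = Tf`
    (∀ f ∈ Cs s r, ∃ fh ∈ Chat s I r, MatchRel s I r f fh ∧
      ∀ gh ∈ Chat s I r, MatchRel s I r f gh → Set.EqOn fh gh (Shat s r)) ∧
    -- `T` is injective
    (∀ f ∈ Cs s r, ∀ g ∈ Cs s r, ∀ fh ∈ Chat s I r,
      MatchRel s I r f fh → MatchRel s I r g fh → Set.EqOn f g (Ilt r)) ∧
    -- `T` is surjective onto `Ĉ`
    (∀ fh ∈ Chat s I r, ∃ f ∈ Cs s r, MatchRel s I r f fh) ∧
    -- `T` is linear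
    (∀ f ∈ Cs s r, ∀ g ∈ Cs s r, ∀ fh ∈ Chat s I r, ∀ gh ∈ Chat s I r, ∀ c : ℝ,
      MatchRel s I r f fh → MatchRel s I r g gh →
        (fun x : ℝ => c * f x + g x) ∈ Cs s r ∧
        (fun xh : ℝ => c * fh xh + gh xh) ∈ Chat s I r ∧
        MatchRel s I r (fun x : ℝ => c * f x + g x)
          (fun xh : ℝ => c * fh xh + gh xh)) ∧
    -- `T` maps `C_s^*` bijectively onto `Ĉ^*`
    (∀ f ∈ Cs s r, ∀ fh ∈ Chat s I r, MatchRel s I r f fh →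
      ((∃ L : ℝ, Filter.Tendsto f
          (Filter.comap (fun x : ℝ => (x : EReal)) (nhdsWithin r (Set.Iio r)))
          (nhds L)) ↔
        (∃ L : ℝ, Filter.Tendsto fh
          (Filter.comap (fun xh : ℝ => (xh : EReal))
            (nhdsWithin (rhat s r) (Set.Iio (rhat s r)))) (nhds L)))) := by
  have H : S9.Good r I s := ⟨hr, hI, hmono, hs0, hs0', hslt, hsr⟩
  refine ⟨?_, ?_, ?_, ?_, ?_⟩
  · -- existence and uniqueness
    intro f hf
    refine ⟨S9.hatf r I s f, S9.hatf_mem_Chat H hf,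
      ⟨fun x hx => S9.hatf_s H hf hx,
       fun x hx0 hxr L hL => S9.hatf_sminus H hf ⟨hx0.le, hxr⟩ hx0 hL,
       fun x hx0 hxr hsp L hL => S9.hatf_splus H hf ⟨hx0.le, hxr⟩ hx0 hsp hL⟩, ?_⟩
    intro gh hgh hmg
    exact S9.chat_unique H (S9.hatf_mem_Chat H hf) hgh
      (fun x hx => (S9.hatf_s H hf hx).trans (hmg.1 x hx).symm)
  · -- injectivity
    intro f _ g _ fh _ m1 m2 x hx
    rw [← m1.1 x hx, m2.1 x hx]
  · -- surjectivity
    intro fh hfh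
    exact ⟨fun x => fh (s x), S9.comp_mem_Cs H hfh, S9.comp_matchrel H hfh⟩
  · -- linearity
    intro f hf g hg fh hfh gh hgh c m1 m2
    exact ⟨S9.lin_Cs hf hg c, S9.lin_Chat hfh hgh c, S9.lin_matchrel hf hg m1 m2 c⟩
  · -- the starred classes
    intro f hf fh hfh m
    constructor
    · rintro ⟨L, hL⟩
      refine ⟨L, ?_⟩
      have h1 := S9.star_forward H hf hL
      have heqn : Set.EqOn (S9.hatf r I s f) fh (Shat s r) :=
        S9.chat_unique H (S9.hatf_mem_Chat H hf) hfh
          (fun x hx => (S9.hatf_s H hf hx).trans (m.1 x hx).symm)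
      refine Filter.Tendsto.congr' ?_ h1
      have h0rhat : ((0:ℝ) : EReal) < rhat s r := by
        have := H.hslt 0 (S9.zero_mem_Ilt H)
        rwa [H.hs0] at this
      filter_upwards [Filter.preimage_mem_comap (Ioo_mem_nhdsLT h0rhat)] with y hy
      simp only [Set.mem_preimage, Set.mem_Ioo] at hy
      have hy0 : ((0:ℝ) : EReal) < (y : EReal) := by exact_mod_cast hy.1
      exact heqn ⟨(EReal.coe_lt_coe_iff.1 hy0).le, hy.2⟩
    · rintro ⟨L, hL⟩
      exact ⟨L, S9.star_backward H hL m.1⟩
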